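/- arXiv:math/0702780 — 11 statements merged into one kernel-verified Lean document; each statement's English description precedes it below -/
import Mathlib

section
/- Let p be a prime and A a subset of F_p with |A| > 1. Then there exists an absolute constant c > 0 (independent of p and A) such that max{|A+A|, |AA|} ≥ c · min{ |A|^{5/3} p^{-1/3} (log |A|)^{-1/3} , |A|^{2/3} p^{1/3} (log |A|)^{-1/3} }. -/
open Finset

namespace Garaev

variable {p : ℕ} [NeZero p]

lemma conj_std (x : ZMod p) :
    (starRingEnd ℂ) (ZMod.stdAddChar x) = ZMod.stdAddChar (-x) := by
  rw [ZMod.stdAddChar_apply, ZMod.stdAddChar_apply, AddChar.map_neg_eq_inv, Circle.coe_inv,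
    Complex.inv_def]
  simp [Complex.normSq_eq_norm_sq, Circle.norm_coe]

lemma sum_char (x : ZMod p) :
    ∑ r : ZMod p, ZMod.stdAddChar (r * x) = if x = 0 then (p : ℂ) else 0 := by
  have := AddChar.sum_mulShift (ψ := (ZMod.stdAddChar : AddChar (ZMod p) ℂ)) x
    (ZMod.isPrimitive_stdAddChar p)
  rw [this, ZMod.card]
  split <;> simp

lemma parseval (B : Finset (ZMod p)) (φ : ZMod p → ZMod p) (hφ : Set.InjOn φ B) :
    ∑ r : ZMod p, ‖∑ c ∈ B, ZMod.stdAddChar (r * φ c)‖ ^ 2 = p * B.card := by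
  have key : ∑ r : ZMod p, (‖∑ c ∈ B, ZMod.stdAddChar (r * φ c)‖ : ℂ) ^ 2
      = (p : ℂ) * B.card := by
    have h1 : ∀ r : ZMod p, (‖∑ c ∈ B, ZMod.stdAddChar (r * φ c)‖ : ℂ) ^ 2
        = ∑ c ∈ B, ∑ c' ∈ B, ZMod.stdAddChar (r * (φ c - φ c')) := by
      intro r
      rw [← Complex.mul_conj', map_sum, Finset.sum_mul_sum]
      refine Finset.sum_congr rfl fun c _ => Finset.sum_congr rfl fun c' _ => ?_
      rw [conj_std, ← AddChar.map_add_eq_mul]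
      congr 1
      ring
    simp_rw [h1]
    rw [Finset.sum_comm]
    have swap : ∀ c ∈ B, ∑ r : ZMod p, ∑ c' ∈ B, ZMod.stdAddChar (r * (φ c - φ c'))
        = ∑ c' ∈ B, ∑ r : ZMod p, ZMod.stdAddChar (r * (φ c - φ c')) :=
      fun c _ => Finset.sum_comm
    rw [Finset.sum_congr rfl swap]
    have h2 : ∀ c ∈ B, ∑ c' ∈ B, ∑ r : ZMod p, ZMod.stdAddChar (r * (φ c - φ c'))
        = (p : ℂ) := by
      intro c hc
      simp_rw [sum_char]
      have : ∀ c' ∈ B, (if φ c - φ c' = 0 then (p : ℂ) else 0)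
          = (if c = c' then (p : ℂ) else 0) := by
        intro c' hc'
        by_cases h : c = c'
        · simp [h]
        · rw [if_neg (fun hh => h (hφ hc hc' (sub_eq_zero.mp hh))), if_neg h]
      rw [Finset.sum_congr rfl this, Finset.sum_ite_eq, if_pos hc]
    rw [Finset.sum_congr rfl h2, Finset.sum_const, nsmul_eq_mul, mul_comm]
  exact_mod_cast key

lemma bilinear [Fact p.Prime] {r : ZMod p} (hr : r ≠ 0) (T V : Finset (ZMod p)) :
    ‖∑ u ∈ T, ∑ v ∈ V, ZMod.stdAddChar (r * (u * v))‖ ^ 2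
      ≤ (T.card : ℝ) * ((p : ℝ) * V.card) := by
  have h0 : ‖∑ u ∈ T, ∑ v ∈ V, ZMod.stdAddChar (r * (u * v))‖
      ≤ ∑ u ∈ T, ‖∑ v ∈ V, ZMod.stdAddChar (r * (u * v))‖ := norm_sum_le _ _
  have h1 : (∑ u ∈ T, ‖∑ v ∈ V, ZMod.stdAddChar (r * (u * v))‖) ^ 2
      ≤ (T.card : ℝ) * ∑ u ∈ T, ‖∑ v ∈ V, ZMod.stdAddChar (r * (u * v))‖ ^ 2 := by
    simpa using Finset.sum_mul_sq_le_sq_mul_sq T 1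
      (fun u => ‖∑ v ∈ V, ZMod.stdAddChar (r * (u * v))‖)
  have h2 : ∑ u ∈ T, ‖∑ v ∈ V, ZMod.stdAddChar (r * (u * v))‖ ^ 2
      ≤ ∑ u : ZMod p, ‖∑ v ∈ V, ZMod.stdAddChar (r * (u * v))‖ ^ 2 :=
    Finset.sum_le_sum_of_subset_of_nonneg (Finset.subset_univ T)
      (fun _ _ _ => sq_nonneg _)
  have h3 : ∑ u : ZMod p, ‖∑ v ∈ V, ZMod.stdAddChar (r * (u * v))‖ ^ 2
      = (p : ℝ) * V.card := by
    have : ∀ u : ZMod p, ∀ v : ZMod p, r * (u * v) = u * (r * v) := fun u v => by ring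
    simp_rw [this]
    exact parseval V (fun v => r * v) ((mul_right_injective₀ hr).injOn)
  calc ‖∑ u ∈ T, ∑ v ∈ V, ZMod.stdAddChar (r * (u * v))‖ ^ 2
      ≤ (∑ u ∈ T, ‖∑ v ∈ V, ZMod.stdAddChar (r * (u * v))‖) ^ 2 := by
        apply pow_le_pow_left₀ (norm_nonneg _) h0
    _ ≤ (T.card : ℝ) * ∑ u ∈ T, ‖∑ v ∈ V, ZMod.stdAddChar (r * (u * v))‖ ^ 2 := h1
    _ ≤ (T.card : ℝ) * ((p : ℝ) * V.card) := by
        rw [← h3]; exact mul_le_mul_of_nonneg_left h2 (Nat.cast_nonneg _)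

lemma count_eq (T V A S : Finset (ZMod p)) :
    (((((T ×ˢ V) ×ˢ (A ×ˢ S)).filter
        (fun x => x.1.1 * x.1.2 + (x.2.1 - x.2.2) = 0)).card : ℂ) * p)
      = ∑ r : ZMod p,
          (∑ u ∈ T, ∑ v ∈ V, ZMod.stdAddChar (r * (u * v))) *
          ((∑ c ∈ A, ZMod.stdAddChar (r * c)) *
           (∑ s ∈ S, ZMod.stdAddChar (r * (-s)))) := by
  have expand : ∀ r : ZMod p,
      (∑ u ∈ T, ∑ v ∈ V, ZMod.stdAddChar (r * (u * v))) *
        ((∑ c ∈ A, ZMod.stdAddChar (r * c)) *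
         (∑ s ∈ S, ZMod.stdAddChar (r * (-s))))
      = ∑ x ∈ (T ×ˢ V) ×ˢ (A ×ˢ S),
          ZMod.stdAddChar (r * (x.1.1 * x.1.2 + (x.2.1 - x.2.2))) := by
    intro r
    have e1 : (∑ u ∈ T, ∑ v ∈ V, ZMod.stdAddChar (r * (u * v)))
        = ∑ y ∈ T ×ˢ V, ZMod.stdAddChar (r * (y.1 * y.2)) :=
      (Finset.sum_product' (s := T) (t := V) (f := fun u v => ZMod.stdAddChar (r * (u * v)))).symm
    have e2 : (∑ c ∈ A, ZMod.stdAddChar (r * c)) *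
        (∑ s ∈ S, ZMod.stdAddChar (r * (-s)))
        = ∑ z ∈ A ×ˢ S, ZMod.stdAddChar (r * (z.1 - z.2)) := by
      rw [Finset.sum_mul_sum]
      rw [Finset.sum_product' (s := A) (t := S) (f := fun c s => ZMod.stdAddChar (r * (c - s)))]
      refine Finset.sum_congr rfl fun c _ => Finset.sum_congr rfl fun s _ => ?_
      rw [← AddChar.map_add_eq_mul]
      congr 1
      ring
    rw [e1, e2, Finset.sum_mul_sum]
    rw [Finset.sum_product (s := T ×ˢ V) (t := A ×ˢ S)
      (f := fun x : (ZMod p × ZMod p) × (ZMod p × ZMod p) => ZMod.stdAddChar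
      (r * (x.1.1 * x.1.2 + (x.2.1 - x.2.2))))]
    refine Finset.sum_congr rfl fun y _ => Finset.sum_congr rfl fun z _ => ?_
    rw [← AddChar.map_add_eq_mul]
    congr 1
    ring
  simp_rw [expand]
  rw [Finset.sum_comm]
  have h2 : ∀ x ∈ (T ×ˢ V) ×ˢ (A ×ˢ S),
      ∑ r : ZMod p, ZMod.stdAddChar (r * (x.1.1 * x.1.2 + (x.2.1 - x.2.2)))
      = if x.1.1 * x.1.2 + (x.2.1 - x.2.2) = 0 then (p : ℂ) else 0 :=
    fun x _ => sum_char _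
  rw [Finset.sum_congr rfl h2, ← Finset.sum_filter, Finset.sum_const, nsmul_eq_mul]

lemma main_bound [Fact p.Prime] (T V A S : Finset (ZMod p)) :
    ((((T ×ˢ V) ×ˢ (A ×ˢ S)).filter
        (fun x => x.1.1 * x.1.2 + (x.2.1 - x.2.2) = 0)).card : ℝ) * p
      ≤ (T.card : ℝ) * V.card * ((A.card : ℝ) * S.card)
        + Real.sqrt ((T.card : ℝ) * ((p : ℝ) * V.card))
          * (Real.sqrt ((p : ℝ) * A.card) * Real.sqrt ((p : ℝ) * S.card)) := by
  classical
  have hN : ((((T ×ˢ V) ×ˢ (A ×ˢ S)).filter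
        (fun x => x.1.1 * x.1.2 + (x.2.1 - x.2.2) = 0)).card : ℝ) * p
      = ‖∑ r : ZMod p,
          (∑ u ∈ T, ∑ v ∈ V, ZMod.stdAddChar (r * (u * v))) *
          ((∑ c ∈ A, ZMod.stdAddChar (r * c)) *
           (∑ s ∈ S, ZMod.stdAddChar (r * (-s))))‖ := by
    rw [← count_eq, norm_mul]
    simp
  rw [hN]
  have step1 : ‖∑ r : ZMod p,
          (∑ u ∈ T, ∑ v ∈ V, ZMod.stdAddChar (r * (u * v))) *
          ((∑ c ∈ A, ZMod.stdAddChar (r * c)) *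
           (∑ s ∈ S, ZMod.stdAddChar (r * (-s))))‖
      ≤ ∑ r : ZMod p,
          ‖∑ u ∈ T, ∑ v ∈ V, ZMod.stdAddChar (r * (u * v))‖ *
          (‖∑ c ∈ A, ZMod.stdAddChar (r * c)‖ *
           ‖∑ s ∈ S, ZMod.stdAddChar (r * (-s))‖) := by
    refine (norm_sum_le _ _).trans (le_of_eq (Finset.sum_congr rfl fun r _ => ?_))
    rw [norm_mul, norm_mul]
  refine step1.trans ?_
  rw [← Finset.add_sum_erase Finset.univ _ (Finset.mem_univ (0 : ZMod p))]
  have hzero : ‖∑ u ∈ T, ∑ v ∈ V, ZMod.stdAddChar ((0 : ZMod p) * (u * v))‖ *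
      (‖∑ c ∈ A, ZMod.stdAddChar ((0 : ZMod p) * c)‖ *
       ‖∑ s ∈ S, ZMod.stdAddChar ((0 : ZMod p) * (-s))‖)
      = (T.card : ℝ) * V.card * ((A.card : ℝ) * S.card) := by
    simp [zero_mul]
  rw [hzero]
  gcongr
  -- remains: the nonzero-r sum
  have hfr : ∀ r ∈ Finset.univ.erase (0 : ZMod p),
      ‖∑ u ∈ T, ∑ v ∈ V, ZMod.stdAddChar (r * (u * v))‖
        ≤ Real.sqrt ((T.card : ℝ) * ((p : ℝ) * V.card)) := by
    intro r hr
    have hr0 : r ≠ 0 := Finset.ne_of_mem_erase hr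
    have := bilinear hr0 T V
    have h1 : ‖∑ u ∈ T, ∑ v ∈ V, ZMod.stdAddChar (r * (u * v))‖
        = Real.sqrt (‖∑ u ∈ T, ∑ v ∈ V, ZMod.stdAddChar (r * (u * v))‖ ^ 2) := by
      rw [Real.sqrt_sq (norm_nonneg _)]
    rw [h1]
    exact Real.sqrt_le_sqrt this
  calc ∑ r ∈ Finset.univ.erase (0 : ZMod p),
        ‖∑ u ∈ T, ∑ v ∈ V, ZMod.stdAddChar (r * (u * v))‖ *
        (‖∑ c ∈ A, ZMod.stdAddChar (r * c)‖ *
         ‖∑ s ∈ S, ZMod.stdAddChar (r * (-s))‖)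
      ≤ ∑ r ∈ Finset.univ.erase (0 : ZMod p),
        Real.sqrt ((T.card : ℝ) * ((p : ℝ) * V.card)) *
        (‖∑ c ∈ A, ZMod.stdAddChar (r * c)‖ *
         ‖∑ s ∈ S, ZMod.stdAddChar (r * (-s))‖) := by
        refine Finset.sum_le_sum fun r hr => ?_
        exact mul_le_mul_of_nonneg_right (hfr r hr)
          (mul_nonneg (norm_nonneg _) (norm_nonneg _))
    _ = Real.sqrt ((T.card : ℝ) * ((p : ℝ) * V.card)) *
        ∑ r ∈ Finset.univ.erase (0 : ZMod p),
          ‖∑ c ∈ A, ZMod.stdAddChar (r * c)‖ *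
          ‖∑ s ∈ S, ZMod.stdAddChar (r * (-s))‖ := by
        rw [Finset.mul_sum]
    _ ≤ Real.sqrt ((T.card : ℝ) * ((p : ℝ) * V.card)) *
        (Real.sqrt ((p : ℝ) * A.card) * Real.sqrt ((p : ℝ) * S.card)) := by
        refine mul_le_mul_of_nonneg_left ?_ (Real.sqrt_nonneg _)
        have cs := Finset.sum_mul_sq_le_sq_mul_sq (Finset.univ.erase (0 : ZMod p))
          (fun r => ‖∑ c ∈ A, ZMod.stdAddChar (r * c)‖)
          (fun r => ‖∑ s ∈ S, ZMod.stdAddChar (r * (-s))‖)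
        have hg2 : ∑ r ∈ Finset.univ.erase (0 : ZMod p),
            ‖∑ c ∈ A, ZMod.stdAddChar (r * c)‖ ^ 2 ≤ (p : ℝ) * A.card := by
          refine (Finset.sum_le_sum_of_subset_of_nonneg (Finset.subset_univ _)
            (fun _ _ _ => sq_nonneg _)).trans (le_of_eq ?_)
          simpa using parseval A (fun c => c) (fun x _ y _ hxy => hxy)
        have hh2 : ∑ r ∈ Finset.univ.erase (0 : ZMod p),
            ‖∑ s ∈ S, ZMod.stdAddChar (r * (-s))‖ ^ 2 ≤ (p : ℝ) * S.card := by
          refine (Finset.sum_le_sum_of_subset_of_nonneg (Finset.subset_univ _)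
            (fun _ _ _ => sq_nonneg _)).trans (le_of_eq ?_)
          simpa using parseval S (fun s => -s) (neg_injective.injOn)
        rw [← Real.sqrt_mul (by positivity) ((p : ℝ) * S.card)]
        rw [show ∑ r ∈ Finset.univ.erase (0 : ZMod p),
            ‖∑ c ∈ A, ZMod.stdAddChar (r * c)‖ *
            ‖∑ s ∈ S, ZMod.stdAddChar (r * (-s))‖
          = Real.sqrt ((∑ r ∈ Finset.univ.erase (0 : ZMod p),
            ‖∑ c ∈ A, ZMod.stdAddChar (r * c)‖ *
            ‖∑ s ∈ S, ZMod.stdAddChar (r * (-s))‖) ^ 2) from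
          (Real.sqrt_sq (Finset.sum_nonneg fun r _ =>
            mul_nonneg (norm_nonneg _) (norm_nonneg _))).symm]
        refine Real.sqrt_le_sqrt (cs.trans ?_)
        exact mul_le_mul hg2 hh2 (Finset.sum_nonneg fun _ _ => sq_nonneg _)
          (by positivity)

open Pointwise in
lemma lower_bound [Fact p.Prime] (A : Finset (ZMod p)) :
    A.card * ((A.erase 0).card * A.card)
      ≤ ((((A * A) ×ˢ ((A.erase 0).image (·⁻¹))) ×ˢ (A ×ˢ (A + A))).filter
          (fun x => x.1.1 * x.1.2 + (x.2.1 - x.2.2) = 0)).card := by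
  classical
  have := Finset.card_le_card_of_injOn
    (f := fun x : ZMod p × ZMod p × ZMod p => ((x.1 * x.2.1, x.2.1⁻¹), (x.2.2, x.1 + x.2.2)))
    (s := A ×ˢ ((A.erase 0) ×ˢ A))
    (t := (((A * A) ×ˢ ((A.erase 0).image (·⁻¹))) ×ˢ (A ×ˢ (A + A))).filter
          (fun x => x.1.1 * x.1.2 + (x.2.1 - x.2.2) = 0))
    ?_ ?_
  · simpa [Finset.card_product, mul_assoc] using this
  · rintro ⟨a, b, c⟩ hx
    simp only [Finset.mem_coe, Finset.mem_product] at hx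
    obtain ⟨ha, hb, hc⟩ := hx
    have hb0 : b ≠ 0 := Finset.ne_of_mem_erase hb
    rw [Finset.mem_coe, Finset.mem_filter]
    constructor
    · simp only [Finset.mem_product]
      exact ⟨⟨Finset.mul_mem_mul ha (Finset.mem_of_mem_erase hb),
        Finset.mem_image_of_mem _ hb⟩, hc, Finset.add_mem_add ha hc⟩
    · simp only
      rw [mul_inv_cancel_right₀ hb0]
      ring
  · rintro ⟨a, b, c⟩ hx ⟨a', b', c'⟩ hy h
    simp only [Prod.mk.injEq] at h
    obtain ⟨⟨h1, h2⟩, h3, h4⟩ := h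
    simp only [Finset.mem_coe, Finset.mem_product] at hx hy
    have hb0 : b ≠ 0 := Finset.ne_of_mem_erase hx.2.1
    have hbb : b = b' := inv_injective h2
    subst hbb
    have haa : a = a' := mul_right_cancel₀ hb0 h1
    simp [haa, h3]

lemma arith_step (pR a M : ℝ) (hp : 0 < pR) (ha : 2 ≤ a) (hM : 0 ≤ M)
    (key : pR * (a * ((a - 1) * a)) ≤ M * a * (a * M) + pR * M * a * Real.sqrt pR) :
    min (Real.sqrt (pR * a)) (a ^ 2 / Real.sqrt pR) ≤ 4 * M := by
  have ha0 : (0 : ℝ) < a := by linarith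
  have half : pR * a ^ 3 / 2 ≤ M * a * (a * M) + pR * M * a * Real.sqrt pR := by
    nlinarith [key, mul_nonneg (mul_nonneg (mul_nonneg hp.le ha0.le) ha0.le)
      (sub_nonneg.2 ha)]
  rcases le_or_gt (pR * a ^ 3 / 4) (M * a * (a * M)) with hcase | hcase
  · have hM2 : pR * a ≤ (2 * M) ^ 2 := by
      nlinarith [hcase, mul_pos ha0 ha0]
    have hfin : Real.sqrt (pR * a) ≤ 2 * M := by
      calc Real.sqrt (pR * a) ≤ Real.sqrt ((2 * M) ^ 2) := Real.sqrt_le_sqrt hM2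
        _ = 2 * M := Real.sqrt_sq (by linarith)
    exact (min_le_left _ _).trans (hfin.trans (by linarith))
  · have hterm : pR * a ^ 3 / 4 ≤ pR * M * a * Real.sqrt pR := by linarith
    have hsp : (0 : ℝ) < Real.sqrt pR := Real.sqrt_pos.2 hp
    have hfin : a ^ 2 / Real.sqrt pR ≤ 4 * M := by
      rw [div_le_iff₀ hsp]
      nlinarith [hterm, mul_pos hp ha0, hsp, hM]
    exact (min_le_right _ _).trans hfin

open Pointwise in
lemma garaev_one {p : ℕ} [Fact p.Prime] (A : Finset (ZMod p)) (hA : 2 ≤ A.card) :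
    min (Real.sqrt ((p : ℝ) * A.card)) ((A.card : ℝ) ^ 2 / Real.sqrt p)
      ≤ 4 * max ((A + A).card : ℝ) ((A * A).card : ℝ) := by
  classical
  haveI : NeZero p := ⟨(Fact.out : p.Prime).ne_zero⟩
  have hp2 : 2 ≤ p := (Fact.out : p.Prime).two_le
  have hpR : (0 : ℝ) < p := by positivity
  have ha2 : (2 : ℝ) ≤ (A.card : ℝ) := by exact_mod_cast hA
  have ha0 : (0 : ℝ) < (A.card : ℝ) := by linarith
  have hM0 : (0 : ℝ) ≤ max ((A + A).card : ℝ) ((A * A).card : ℝ) := by positivity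
  have hSM : ((A + A).card : ℝ) ≤ max ((A + A).card : ℝ) ((A * A).card : ℝ) :=
    le_max_left _ _
  have hTM : ((A * A).card : ℝ) ≤ max ((A + A).card : ℝ) ((A * A).card : ℝ) :=
    le_max_right _ _
  have hVa : (((A.erase 0).image (·⁻¹)).card : ℝ) ≤ (A.card : ℝ) := by
    exact_mod_cast (Finset.card_image_le).trans (Finset.card_erase_le)
  have hEa : (A.card : ℝ) - 1 ≤ ((A.erase 0).card : ℝ) := by
    have h1 : A.card - 1 ≤ (A.erase 0).card := Finset.pred_card_le_card_erase
    have h2 : (1 : ℕ) ≤ A.card := le_trans (by norm_num) hA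
    have h3 := Nat.cast_le (α := ℝ) |>.2 h1
    rwa [Nat.cast_sub h2, Nat.cast_one] at h3
  refine arith_step p (A.card : ℝ) _ hpR ha2 hM0 ?_
  set M : ℝ := max ((A + A).card : ℝ) ((A * A).card : ℝ) with hM_def
  have hmain := main_bound (A * A) ((A.erase 0).image (·⁻¹)) A (A + A)
  have hlow := lower_bound (p := p) A
  have hN : (p : ℝ) * ((A.card : ℝ) * (((A.erase 0).card : ℝ) * (A.card : ℝ)))
      ≤ ((((((A * A) ×ˢ ((A.erase 0).image (·⁻¹))) ×ˢ (A ×ˢ (A + A))).filter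
          (fun x => x.1.1 * x.1.2 + (x.2.1 - x.2.2) = 0)).card : ℝ) * p) := by
    rw [mul_comm]
    apply mul_le_mul_of_nonneg_right _ (le_of_lt hpR)
    exact_mod_cast hlow
  have step : (p : ℝ) * ((A.card : ℝ) * (((A.card : ℝ) - 1) * (A.card : ℝ)))
      ≤ (p : ℝ) * ((A.card : ℝ) * (((A.erase 0).card : ℝ) * (A.card : ℝ))) :=
    mul_le_mul_of_nonneg_left (mul_le_mul_of_nonneg_left
      (mul_le_mul_of_nonneg_right hEa ha0.le) ha0.le) hpR.le
  refine step.trans (hN.trans (hmain.trans ?_))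
  have sqrt_term : Real.sqrt (((A * A).card : ℝ)
        * ((p : ℝ) * (((A.erase 0).image (·⁻¹)).card : ℝ)))
      * (Real.sqrt ((p : ℝ) * A.card) * Real.sqrt ((p : ℝ) * ((A + A).card : ℝ)))
      ≤ (p : ℝ) * M * (A.card : ℝ) * Real.sqrt p := by
    have h1 : Real.sqrt (((A * A).card : ℝ)
          * ((p : ℝ) * (((A.erase 0).image (·⁻¹)).card : ℝ)))
        ≤ Real.sqrt (M * ((p : ℝ) * (A.card : ℝ))) := by
      apply Real.sqrt_le_sqrt
      exact mul_le_mul hTM (mul_le_mul_of_nonneg_left hVa hpR.le)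
        (by positivity) hM0
    have h2 : Real.sqrt ((p : ℝ) * ((A + A).card : ℝ)) ≤ Real.sqrt ((p : ℝ) * M) :=
      Real.sqrt_le_sqrt (mul_le_mul_of_nonneg_left hSM hpR.le)
    have h3 : Real.sqrt (M * ((p : ℝ) * (A.card : ℝ))) * (Real.sqrt ((p : ℝ) * (A.card : ℝ))
        * Real.sqrt ((p : ℝ) * M)) = (p : ℝ) * M * (A.card : ℝ) * Real.sqrt p := by
      rw [← Real.sqrt_mul (by positivity), ← Real.sqrt_mul (by positivity)]
      rw [show M * ((p : ℝ) * (A.card : ℝ)) * ((p : ℝ) * (A.card : ℝ) * ((p : ℝ) * M))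
          = ((p : ℝ) * M * (A.card : ℝ)) ^ 2 * p by ring]
      rw [Real.sqrt_mul (sq_nonneg _), Real.sqrt_sq (by positivity)]
    calc Real.sqrt (((A * A).card : ℝ)
          * ((p : ℝ) * (((A.erase 0).image (·⁻¹)).card : ℝ)))
        * (Real.sqrt ((p : ℝ) * A.card) * Real.sqrt ((p : ℝ) * ((A + A).card : ℝ)))
        ≤ Real.sqrt (M * ((p : ℝ) * (A.card : ℝ))) * (Real.sqrt ((p : ℝ) * (A.card : ℝ))
          * Real.sqrt ((p : ℝ) * M)) := by
          apply mul_le_mul h1 _ (by positivity) (Real.sqrt_nonneg _)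
          exact mul_le_mul_of_nonneg_left h2 (Real.sqrt_nonneg _)
      _ = (p : ℝ) * M * (A.card : ℝ) * Real.sqrt p := h3
  have main_term : ((A * A).card : ℝ) * ((((A.erase 0).image (·⁻¹)).card : ℝ))
        * ((A.card : ℝ) * ((A + A).card : ℝ))
      ≤ M * (A.card : ℝ) * ((A.card : ℝ) * M) := by
    apply mul_le_mul
    · exact mul_le_mul hTM hVa (Nat.cast_nonneg _) hM0
    · exact mul_le_mul_of_nonneg_left hSM (Nat.cast_nonneg _)
    · positivity
    · positivity
  linarith [sqrt_term, main_term]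

lemma pow6_rpow (x : ℝ) (hx : 0 ≤ x) (q : ℝ) (n : ℕ) (hqn : q * 6 = (n : ℝ)) :
    (x ^ q) ^ (6 : ℕ) = x ^ n := by
  rw [← Real.rpow_natCast (x ^ q) 6, ← Real.rpow_mul hx,
    show q * ((6 : ℕ) : ℝ) = (n : ℝ) by push_cast; exact hqn, Real.rpow_natCast]

lemma sqrt_pow6 (x : ℝ) (hx : 0 ≤ x) : (Real.sqrt x) ^ (6 : ℕ) = x ^ 3 := by
  rw [show (6 : ℕ) = 2 * 3 from rfl, pow_mul, Real.sq_sqrt hx]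

lemma final_arith (P a M : ℝ) (hP2 : 2 ≤ P) (ha2 : 2 ≤ a) (haP : a ≤ P)
    (h1 : min (Real.sqrt (P * a)) (a ^ 2 / Real.sqrt P) ≤ 4 * M) (h2 : a ≤ M) :
    Real.log 2 ^ ((1 : ℝ) / 3) / 4 *
      min (a ^ ((5 : ℝ) / 3) * P ^ (-(1 : ℝ) / 3) * Real.log a ^ (-(1 : ℝ) / 3))
          (a ^ ((2 : ℝ) / 3) * P ^ ((1 : ℝ) / 3) * Real.log a ^ (-(1 : ℝ) / 3)) ≤ M := by
  have ha0 : (0 : ℝ) < a := by linarith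
  have hP0 : (0 : ℝ) < P := by linarith
  have hM0 : (0 : ℝ) < M := by linarith
  have hL : (0 : ℝ) < Real.log a := Real.log_pos (by linarith)
  have hl2 : (0 : ℝ) < Real.log 2 := Real.log_pos (by norm_num)
  have hlog : Real.log 2 ≤ Real.log a := Real.log_le_log (by norm_num) ha2
  set X : ℝ := Real.log a ^ (-(1 : ℝ) / 3) with hX_def
  have hXeq : X = (Real.log a ^ ((1 : ℝ) / 3))⁻¹ := by
    rw [hX_def, show (-(1 : ℝ) / 3) = -((1 : ℝ) / 3) by norm_num, Real.rpow_neg hL.le]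
  have hX0 : 0 ≤ X := by rw [hXeq]; positivity
  have hfac : Real.log 2 ^ ((1 : ℝ) / 3) * X ≤ 1 := by
    rw [hXeq, ← div_eq_mul_inv]
    exact div_le_one_of_le₀ (Real.rpow_le_rpow hl2.le hlog (by norm_num)) (by positivity)
  set t1 : ℝ := a ^ ((5 : ℝ) / 3) * P ^ (-(1 : ℝ) / 3) with ht1_def
  set t2 : ℝ := a ^ ((2 : ℝ) / 3) * P ^ ((1 : ℝ) / 3) with ht2_def
  have ht1eq : t1 = a ^ ((5 : ℝ) / 3) / P ^ ((1 : ℝ) / 3) := by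
    rw [ht1_def, show (-(1 : ℝ) / 3) = -((1 : ℝ) / 3) by norm_num, Real.rpow_neg hP0.le]
    exact (div_eq_mul_inv _ _).symm
  have ht10 : 0 ≤ t1 := by rw [ht1eq]; positivity
  have ht20 : 0 ≤ t2 := by rw [ht2_def]; positivity
  -- the 6th powers
  have e1 : (a ^ ((5 : ℝ) / 3)) ^ (6 : ℕ) = a ^ (10 : ℕ) :=
    pow6_rpow a ha0.le _ 10 (by norm_num)
  have e2 : (P ^ ((1 : ℝ) / 3)) ^ (6 : ℕ) = P ^ (2 : ℕ) :=
    pow6_rpow P hP0.le _ 2 (by norm_num)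
  have e3 : (a ^ ((2 : ℝ) / 3)) ^ (6 : ℕ) = a ^ (4 : ℕ) :=
    pow6_rpow a ha0.le _ 4 (by norm_num)
  have hmin4 : min t1 t2 ≤ 4 * M := by
    rcases le_or_gt (a ^ 2) P with c1 | c1
    · -- small a : t1 ≤ a
      have key : t1 ≤ a := by
        rw [ht1eq]
        apply le_of_pow_le_pow_left₀ (n := 6) (by norm_num) ha0.le
        rw [div_pow, e1, e2, div_le_iff₀ (by positivity)]
        have h4 : a ^ 4 ≤ P ^ 2 := by nlinarith [sq_nonneg a]
        calc a ^ (10 : ℕ) = a ^ 6 * a ^ 4 := by ring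
          _ ≤ a ^ 6 * P ^ 2 := by
              exact mul_le_mul_of_nonneg_left h4 (by positivity)
          _ = a ^ 6 * P ^ (2 : ℕ) := by norm_num
      exact (min_le_left _ _).trans (key.trans (by linarith))
    · rcases le_or_gt (a ^ 3) (P ^ 2) with c2 | c2
      · -- middle range : t1 ≤ both √(Pa) and a²/√P
        have kA : t1 ≤ Real.sqrt (P * a) := by
          rw [ht1eq]
          apply le_of_pow_le_pow_left₀ (n := 6) (by norm_num) (Real.sqrt_nonneg _)
          rw [div_pow, e1, e2, sqrt_pow6 _ (by positivity), div_le_iff₀ (by positivity)]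
          have i1 : a ^ 6 ≤ P ^ 4 := by nlinarith [pow_nonneg ha0.le 3]
          calc a ^ (10 : ℕ) = a ^ 6 * (a ^ 3 * a) := by ring
            _ ≤ P ^ 4 * (a ^ 3 * a) := mul_le_mul_of_nonneg_right i1 (by positivity)
            _ ≤ P ^ 4 * (a ^ 3 * P) := by
                exact mul_le_mul_of_nonneg_left
                  (mul_le_mul_of_nonneg_left haP (by positivity)) (by positivity)
            _ = (P * a) ^ 3 * P ^ (2 : ℕ) := by ring
        have kB : t1 ≤ a ^ 2 / Real.sqrt P := by
          rw [ht1eq]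
          apply le_of_pow_le_pow_left₀ (n := 6) (by norm_num) (by positivity)
          rw [div_pow, div_pow, e1, e2, sqrt_pow6 _ hP0.le,
            div_le_div_iff₀ (by positivity) (by positivity)]
          calc a ^ (10 : ℕ) * P ^ 3 = a ^ 10 * P ^ 2 * P := by ring
            _ ≤ a ^ 10 * P ^ 2 * a ^ 2 := by
                exact mul_le_mul_of_nonneg_left c1.le (by positivity)
            _ = (a ^ 2) ^ 6 * P ^ (2 : ℕ) := by ring
        calc min t1 t2 ≤ t1 := min_le_left _ _
          _ ≤ min (Real.sqrt (P * a)) (a ^ 2 / Real.sqrt P) := le_min kA kB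
          _ ≤ 4 * M := h1
      · -- large a : t2 ≤ both
        have hPa2 : P ≤ a ^ 2 := le_of_lt c1
        have kC : t2 ≤ Real.sqrt (P * a) := by
          rw [ht2_def]
          apply le_of_pow_le_pow_left₀ (n := 6) (by norm_num) (Real.sqrt_nonneg _)
          rw [mul_pow, e3, e2, sqrt_pow6 _ (by positivity)]
          calc a ^ (4 : ℕ) * P ^ (2 : ℕ) = a ^ 3 * P ^ 2 * a := by ring
            _ ≤ a ^ 3 * P ^ 2 * P := by
                exact mul_le_mul_of_nonneg_left haP (by positivity)
            _ = (P * a) ^ 3 := by ring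
        have kD : t2 ≤ a ^ 2 / Real.sqrt P := by
          rw [ht2_def]
          apply le_of_pow_le_pow_left₀ (n := 6) (by norm_num) (by positivity)
          rw [mul_pow, e3, e2, div_pow, sqrt_pow6 _ hP0.le,
            le_div_iff₀ (by positivity)]
          have i2 : P ^ 4 ≤ a ^ 6 := by nlinarith [pow_nonneg hP0.le 2]
          calc a ^ (4 : ℕ) * P ^ (2 : ℕ) * P ^ 3 = a ^ 4 * P ^ 4 * P := by ring
            _ ≤ a ^ 4 * a ^ 6 * P := by
                exact mul_le_mul_of_nonneg_right
                  (mul_le_mul_of_nonneg_left i2 (by positivity)) hP0.le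
            _ ≤ a ^ 4 * a ^ 6 * a ^ 2 := by
                exact mul_le_mul_of_nonneg_left hPa2 (by positivity)
            _ = (a ^ 2) ^ 6 := by ring
        calc min t1 t2 ≤ t2 := min_le_right _ _
          _ ≤ min (Real.sqrt (P * a)) (a ^ 2 / Real.sqrt P) := le_min kC kD
          _ ≤ 4 * M := h1
  have hminmul : min (t1 * X) (t2 * X) = min t1 t2 * X := by
    rcases le_total t1 t2 with h | h
    · rw [min_eq_left (mul_le_mul_of_nonneg_right h hX0), min_eq_left h]
    · rw [min_eq_right (mul_le_mul_of_nonneg_right h hX0), min_eq_right h]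
  have hmin0 : 0 ≤ min t1 t2 := le_min ht10 ht20
  calc Real.log 2 ^ ((1 : ℝ) / 3) / 4 * min (t1 * X) (t2 * X)
      = Real.log 2 ^ ((1 : ℝ) / 3) * X * min t1 t2 / 4 := by rw [hminmul]; ring
    _ ≤ 1 * min t1 t2 / 4 := by gcongr
    _ = min t1 t2 / 4 := by ring
    _ ≤ M := by linarith

end Garaev

open Pointwise

/-- Garaev's explicit sum-product estimate in `F_p` (Theorem 2). -/
theorem sum_product_estimate_trig :
    ∃ c : ℝ, 0 < c ∧
      ∀ (p : ℕ), p.Prime → ∀ A : Finset (ZMod p), 1 < A.card →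
        c * min
            ((A.card : ℝ) ^ ((5 : ℝ) / 3) * (p : ℝ) ^ (-(1 : ℝ) / 3) *
              Real.log (A.card : ℝ) ^ (-(1 : ℝ) / 3))
            ((A.card : ℝ) ^ ((2 : ℝ) / 3) * (p : ℝ) ^ ((1 : ℝ) / 3) *
              Real.log (A.card : ℝ) ^ (-(1 : ℝ) / 3))
          ≤ max ((A + A).card : ℝ) ((A * A).card : ℝ) := by
  refine ⟨Real.log 2 ^ ((1 : ℝ) / 3) / 4, ?_, ?_⟩
  · have hl2 : (0 : ℝ) < Real.log 2 := Real.log_pos (by norm_num)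
    positivity
  intro p hp A hA
  haveI : Fact p.Prime := ⟨hp⟩
  haveI : NeZero p := ⟨hp.ne_zero⟩
  have hA2 : 2 ≤ A.card := hA
  have ha2 : (2 : ℝ) ≤ (A.card : ℝ) := by exact_mod_cast hA2
  have hP2 : (2 : ℝ) ≤ (p : ℝ) := by exact_mod_cast hp.two_le
  have haP : (A.card : ℝ) ≤ (p : ℝ) := by
    have := Finset.card_le_univ A
    rw [ZMod.card] at this
    exact_mod_cast this
  have hAne : A.Nonempty := Finset.card_pos.1 (by omega)
  have h2 : (A.card : ℝ) ≤ max ((A + A).card : ℝ) ((A * A).card : ℝ) := by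
    have := Finset.card_le_card_add_right (s := A) hAne
    exact le_trans (by exact_mod_cast this) (le_max_left _ _)
  have h1 := Garaev.garaev_one A hA2
  exact Garaev.final_arith (p : ℝ) (A.card : ℝ) _ hP2 ha2 haP h1 h2
end

section
/- Let p be a prime and A a subset of F_p. There exists an absolute constant c > 0 such that whenever 1 < |A| < p^{2/3}, one has max{|A+A|, |AA|} ≥ c · |A|^{5/3} p^{-1/3} (log |A|)^{-1/3}. -/
open Pointwise

section Aux
open Finset
open Finset
variable {p : ℕ} [Fact p.Prime] {ψ : AddChar (ZMod p) ℂ}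

lemma orth (hψ : ψ.IsPrimitive) (u : ZMod p) :
    ∑ t : ZMod p, ψ (t * u) = if u = 0 then (p : ℂ) else 0 := by
  have := AddChar.sum_mulShift u hψ
  rw [ZMod.card] at this
  rw [this]; split <;> simp

lemma conj_psi (a : ZMod p) : (starRingEnd ℂ) (ψ a) = ψ (-a) := by
  have hR : 0 < ringChar (ZMod p) := by
    rw [ZMod.ringChar_zmod_n]; exact (Fact.out : p.Prime).pos
  rw [AddChar.starComp_apply hR, AddChar.inv_apply]

lemma parseval (hψ : ψ.IsPrimitive) (B : Finset (ZMod p)) :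
    ∑ t : ZMod p, ‖∑ z ∈ B, ψ (t * z)‖ ^ 2 = p * B.card := by
  have key : ∑ t : ZMod p, (∑ z ∈ B, ψ (t * z)) * (starRingEnd ℂ) (∑ z ∈ B, ψ (t * z))
      = (p : ℂ) * B.card := by
    have h1 : ∀ t : ZMod p, (∑ z ∈ B, ψ (t * z)) * (starRingEnd ℂ) (∑ z ∈ B, ψ (t * z))
        = ∑ z ∈ B, ∑ z' ∈ B, ψ (t * (z - z')) := by
      intro t
      rw [map_sum, sum_mul_sum]
      congr 1; ext z; congr 1; ext z'
      rw [conj_psi, ← AddChar.map_add_eq_mul]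
      ring_nf
    simp_rw [h1]
    calc ∑ t : ZMod p, ∑ z ∈ B, ∑ z' ∈ B, ψ (t * (z - z'))
        = ∑ z ∈ B, ∑ z' ∈ B, ∑ t : ZMod p, ψ (t * (z - z')) := by
          rw [Finset.sum_comm]; exact Finset.sum_congr rfl fun z _ => Finset.sum_comm
      _ = ∑ z ∈ B, ∑ z' ∈ B, if z - z' = 0 then (p:ℂ) else 0 := by
          simp_rw [orth hψ]
      _ = ∑ z ∈ B, (p:ℂ) := by
          refine Finset.sum_congr rfl fun z hz => ?_
          simp_rw [sub_eq_zero]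
          rw [Finset.sum_ite_eq B z (fun _ => (p:ℂ)), if_pos hz]
      _ = (p : ℂ) * B.card := by rw [Finset.sum_const]; ring
  have h2 : (↑(∑ t : ZMod p, ‖∑ z ∈ B, ψ (t * z)‖ ^ 2) : ℂ) = ((p:ℂ) * (B.card : ℂ)) := by
    rw [← key]
    push_cast
    refine Finset.sum_congr rfl fun t _ => ?_
    rw [Complex.mul_conj, Complex.normSq_eq_norm_sq]
    push_cast; ring
  exact_mod_cast h2
lemma Fbound (hψ : ψ.IsPrimitive) {t : ZMod p} (ht : t ≠ 0) (X Y : Finset (ZMod p)) :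
    ‖∑ x ∈ X, ∑ y ∈ Y, ψ (t * (x * y))‖ ^ 2 ≤ (X.card : ℝ) * (p * Y.card) := by
  have h1 : ‖∑ x ∈ X, ∑ y ∈ Y, ψ (t * (x * y))‖ ≤ ∑ x ∈ X, ‖∑ y ∈ Y, ψ (t * (x * y))‖ :=
    norm_sum_le _ _
  have h2 : (∑ x ∈ X, ‖∑ y ∈ Y, ψ (t * (x * y))‖) ^ 2
      ≤ (X.card : ℝ) * ∑ x ∈ X, ‖∑ y ∈ Y, ψ (t * (x * y))‖ ^ 2 :=
    sq_sum_le_card_mul_sum_sq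
  have h3 : ∑ x ∈ X, ‖∑ y ∈ Y, ψ (t * (x * y))‖ ^ 2
      ≤ ∑ x : ZMod p, ‖∑ y ∈ Y, ψ (t * (x * y))‖ ^ 2 := by
    refine Finset.sum_le_sum_of_subset_of_nonneg (Finset.subset_univ _) ?_
    intros; positivity
  have h4 : ∑ x : ZMod p, ‖∑ y ∈ Y, ψ (t * (x * y))‖ ^ 2 = (p : ℝ) * Y.card := by
    have inj : Function.Injective (fun y : ZMod p => t * y) :=
      fun a b h => by field_simp at h; tauto
    have h5 : ∀ x : ZMod p, ∑ y ∈ Y, ψ (t * (x * y)) = ∑ z ∈ Y.image (fun y => t * y), ψ (x * z) := by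
      intro x
      rw [Finset.sum_image (fun a _ b _ h => inj h)]
      congr 1; ext y; ring_nf
    simp_rw [h5]
    rw [parseval hψ, Finset.card_image_of_injective _ inj]
  calc ‖∑ x ∈ X, ∑ y ∈ Y, ψ (t * (x * y))‖ ^ 2
      ≤ (∑ x ∈ X, ‖∑ y ∈ Y, ψ (t * (x * y))‖) ^ 2 := by
        apply pow_le_pow_left₀ (norm_nonneg _) h1
    _ ≤ (X.card : ℝ) * ∑ x ∈ X, ‖∑ y ∈ Y, ψ (t * (x * y))‖ ^ 2 := h2
    _ ≤ (X.card : ℝ) * ((p : ℝ) * Y.card) := by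
        rw [← h4]; exact mul_le_mul_of_nonneg_left h3 (by positivity)
lemma count_identity (hψ : ψ.IsPrimitive) (X Y Z W : Finset (ZMod p)) :
    (p : ℂ) * ((((X ×ˢ Y) ×ˢ Z ×ˢ W).filter
        (fun q => q.1.1 * q.1.2 = q.2.1 + q.2.2)).card : ℂ)
      = (X.card : ℂ) * Y.card * Z.card * W.card +
        ∑ t ∈ Finset.univ.erase (0 : ZMod p),
          (∑ x ∈ X, ∑ y ∈ Y, ψ (t * (x * y))) *
          (∑ z ∈ Z, ψ (-(t * z))) * (∑ w ∈ W, ψ (-(t * w))) := by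
  have hcard : ((((X ×ˢ Y) ×ˢ Z ×ˢ W).filter
      (fun q => q.1.1 * q.1.2 = q.2.1 + q.2.2)).card : ℂ)
      = ∑ x ∈ X, ∑ y ∈ Y, ∑ z ∈ Z, ∑ w ∈ W,
          (if x * y - z - w = 0 then (1 : ℂ) else 0) := by
    rw [Finset.card_filter]
    push_cast
    simp only [Finset.sum_product]
    refine Finset.sum_congr rfl fun x _ => Finset.sum_congr rfl fun y _ =>
      Finset.sum_congr rfl fun z _ => Finset.sum_congr rfl fun w _ => ?_
    congr 1
    simp [sub_sub, sub_eq_zero]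
  rw [hcard]
  simp_rw [Finset.mul_sum, mul_ite, mul_one, mul_zero, ← orth hψ]
  have hfac : ∀ (t x y z w : ZMod p),
      ψ (t * (x * y - z - w)) = ψ (t * (x * y)) * ψ (-(t * z)) * ψ (-(t * w)) := by
    intro t x y z w
    rw [← AddChar.map_add_eq_mul, ← AddChar.map_add_eq_mul]
    ring_nf
  simp_rw [hfac]
  have s1 : ∀ x y z : ZMod p,
      (∑ w ∈ W, ∑ t : ZMod p, ψ (t * (x * y)) * ψ (-(t * z)) * ψ (-(t * w)))
      = ∑ t : ZMod p, ∑ w ∈ W, ψ (t * (x * y)) * ψ (-(t * z)) * ψ (-(t * w)) :=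
    fun _ _ _ => Finset.sum_comm
  simp_rw [s1]
  have s2 : ∀ x y : ZMod p,
      (∑ z ∈ Z, ∑ t : ZMod p, ∑ w ∈ W, ψ (t * (x * y)) * ψ (-(t * z)) * ψ (-(t * w)))
      = ∑ t : ZMod p, ∑ z ∈ Z, ∑ w ∈ W, ψ (t * (x * y)) * ψ (-(t * z)) * ψ (-(t * w)) :=
    fun _ _ => Finset.sum_comm
  simp_rw [s2]
  have s3 : ∀ x : ZMod p,
      (∑ y ∈ Y, ∑ t : ZMod p, ∑ z ∈ Z, ∑ w ∈ W, ψ (t * (x * y)) * ψ (-(t * z)) * ψ (-(t * w)))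
      = ∑ t : ZMod p, ∑ y ∈ Y, ∑ z ∈ Z, ∑ w ∈ W, ψ (t * (x * y)) * ψ (-(t * z)) * ψ (-(t * w)) :=
    fun _ => Finset.sum_comm
  simp_rw [s3]
  rw [Finset.sum_comm]
  rw [← Finset.add_sum_erase Finset.univ _ (Finset.mem_univ (0 : ZMod p))]
  congr 1
  · simp only [zero_mul, neg_zero, AddChar.map_zero_eq_one, mul_one, Finset.sum_const,
      nsmul_eq_mul, Nat.cast_id, mul_one]
    push_cast
    ring
  · refine Finset.sum_congr rfl fun t _ => ?_
    simp_rw [← Finset.mul_sum, ← Finset.sum_mul]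
    congr 1
    simp_rw [Finset.sum_mul, Finset.mul_sum]
lemma neg_parseval (hψ : ψ.IsPrimitive) (Z : Finset (ZMod p)) :
    ∑ t : ZMod p, ‖∑ z ∈ Z, ψ (-(t * z))‖ ^ 2 = p * Z.card := by
  have h : ∀ t : ZMod p, ∑ z ∈ Z, ψ (-(t * z)) = ∑ z ∈ Z, ψ ((-t) * z) := by
    intro t; refine Finset.sum_congr rfl fun z _ => ?_; ring_nf
  simp_rw [h]
  rw [← parseval hψ Z]
  exact Fintype.sum_equiv (Equiv.neg (ZMod p)) _ _ (fun t => rfl)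

lemma count_le (hψ : ψ.IsPrimitive) (X Y Z W : Finset (ZMod p)) :
    ((((X ×ˢ Y) ×ˢ Z ×ˢ W).filter
        (fun q => q.1.1 * q.1.2 = q.2.1 + q.2.2)).card : ℝ) * p
      ≤ (X.card : ℝ) * Y.card * Z.card * W.card +
        Real.sqrt ((X.card : ℝ) * (p * Y.card)) *
          (Real.sqrt ((p : ℝ) * Z.card) * Real.sqrt ((p : ℝ) * W.card)) := by
  set N := (((X ×ˢ Y) ×ˢ Z ×ˢ W).filter
      (fun q => q.1.1 * q.1.2 = q.2.1 + q.2.2)).card with hN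
  set E := ∑ t ∈ Finset.univ.erase (0 : ZMod p),
      (∑ x ∈ X, ∑ y ∈ Y, ψ (t * (x * y))) *
      (∑ z ∈ Z, ψ (-(t * z))) * (∑ w ∈ W, ψ (-(t * w))) with hE
  -- bound the error term
  have hGH : ∑ t : ZMod p, ‖∑ z ∈ Z, ψ (-(t * z))‖ * ‖∑ w ∈ W, ψ (-(t * w))‖
      ≤ Real.sqrt ((p : ℝ) * Z.card) * Real.sqrt ((p : ℝ) * W.card) := by
    have cs := Finset.sum_mul_sq_le_sq_mul_sq Finset.univ
      (fun t : ZMod p => ‖∑ z ∈ Z, ψ (-(t * z))‖) (fun t : ZMod p => ‖∑ w ∈ W, ψ (-(t * w))‖)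
    rw [neg_parseval hψ Z, neg_parseval hψ W] at cs
    have h0 : (0:ℝ) ≤ ∑ t : ZMod p, ‖∑ z ∈ Z, ψ (-(t * z))‖ * ‖∑ w ∈ W, ψ (-(t * w))‖ := by
      positivity
    calc ∑ t : ZMod p, ‖∑ z ∈ Z, ψ (-(t * z))‖ * ‖∑ w ∈ W, ψ (-(t * w))‖
        ≤ Real.sqrt (((p : ℝ) * Z.card) * ((p : ℝ) * W.card)) := by
          exact Real.le_sqrt_of_sq_le cs
      _ = Real.sqrt ((p : ℝ) * Z.card) * Real.sqrt ((p : ℝ) * W.card) := by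
          rw [Real.sqrt_mul (by positivity)]
  have hEbound : ‖E‖ ≤ Real.sqrt ((X.card : ℝ) * (p * Y.card)) *
      (Real.sqrt ((p : ℝ) * Z.card) * Real.sqrt ((p : ℝ) * W.card)) := by
    have h1 : ‖E‖ ≤ ∑ t ∈ Finset.univ.erase (0 : ZMod p),
        ‖(∑ x ∈ X, ∑ y ∈ Y, ψ (t * (x * y))) *
          (∑ z ∈ Z, ψ (-(t * z))) * (∑ w ∈ W, ψ (-(t * w)))‖ := norm_sum_le _ _
    have h2 : ∑ t ∈ Finset.univ.erase (0 : ZMod p),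
        ‖(∑ x ∈ X, ∑ y ∈ Y, ψ (t * (x * y))) *
          (∑ z ∈ Z, ψ (-(t * z))) * (∑ w ∈ W, ψ (-(t * w)))‖
        ≤ Real.sqrt ((X.card : ℝ) * (p * Y.card)) *
          ∑ t ∈ Finset.univ.erase (0 : ZMod p),
            ‖∑ z ∈ Z, ψ (-(t * z))‖ * ‖∑ w ∈ W, ψ (-(t * w))‖ := by
      rw [Finset.mul_sum]
      refine Finset.sum_le_sum fun t ht => ?_
      rw [norm_mul, norm_mul, mul_assoc]
      refine mul_le_mul_of_nonneg_right ?_ (by positivity)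
      exact Real.le_sqrt_of_sq_le (Fbound hψ (Finset.mem_erase.mp ht).1 X Y)
    have h3 : ∑ t ∈ Finset.univ.erase (0 : ZMod p),
        ‖∑ z ∈ Z, ψ (-(t * z))‖ * ‖∑ w ∈ W, ψ (-(t * w))‖
        ≤ ∑ t : ZMod p, ‖∑ z ∈ Z, ψ (-(t * z))‖ * ‖∑ w ∈ W, ψ (-(t * w))‖ := by
      refine Finset.sum_le_sum_of_subset_of_nonneg (Finset.erase_subset _ _) ?_
      intros; positivity
    calc ‖E‖ ≤ _ := h1
      _ ≤ _ := h2
      _ ≤ Real.sqrt ((X.card : ℝ) * (p * Y.card)) *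
          ∑ t : ZMod p, ‖∑ z ∈ Z, ψ (-(t * z))‖ * ‖∑ w ∈ W, ψ (-(t * w))‖ := by
        exact mul_le_mul_of_nonneg_left h3 (Real.sqrt_nonneg _)
      _ ≤ _ := mul_le_mul_of_nonneg_left hGH (Real.sqrt_nonneg _)
  have key := count_identity hψ X Y Z W
  have hcast : (((N : ℝ) * p - (X.card : ℝ) * Y.card * Z.card * W.card : ℝ) : ℂ) = E := by
    push_cast
    rw [hE, hN]
    linear_combination key
  have hreal : (N : ℝ) * p - (X.card : ℝ) * Y.card * Z.card * W.card ≤ ‖E‖ := by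
    calc (N : ℝ) * p - (X.card : ℝ) * Y.card * Z.card * W.card
        ≤ |(N : ℝ) * p - (X.card : ℝ) * Y.card * Z.card * W.card| := le_abs_self _
      _ = ‖(((N : ℝ) * p - (X.card : ℝ) * Y.card * Z.card * W.card : ℝ) : ℂ)‖ := by
          rw [Complex.norm_real, Real.norm_eq_abs]
      _ = ‖E‖ := by rw [hcast]
  linarith
lemma count_lower (A S P : Finset (ZMod p)) (h0 : (0 : ZMod p) ∉ A)
    (hS : ∀ a ∈ A, ∀ b ∈ A, a + b ∈ S) (hP : ∀ a ∈ A, ∀ b ∈ A, a * b ∈ P) :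
    A.card ^ 3 ≤ (((A ×ˢ S) ×ˢ P ×ˢ P).filter
      (fun q => q.1.1 * q.1.2 = q.2.1 + q.2.2)).card := by
  have hcard : (A ×ˢ A ×ˢ A).card = A.card ^ 3 := by
    rw [Finset.card_product, Finset.card_product]; ring
  rw [← hcard]
  refine Finset.card_le_card_of_injOn
    (fun q => ((q.1, q.2.1 + q.2.2), (q.1 * q.2.1, q.1 * q.2.2))) ?_ ?_
  · rintro ⟨a, b, c⟩ hq
    simp only [Finset.mem_coe, Finset.mem_product] at hq
    obtain ⟨ha, hb, hc⟩ := hq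
    simp only [Finset.mem_coe, Finset.mem_filter, Finset.mem_product]
    exact ⟨⟨⟨ha, hS b hb c hc⟩, hP a ha b hb, hP a ha c hc⟩, by ring⟩
  · rintro ⟨a, b, c⟩ hq ⟨a', b', c'⟩ hq' h
    simp only [Finset.mem_coe, Finset.mem_product] at hq hq'
    simp only [Prod.mk.injEq] at h
    obtain ⟨⟨h1, h2⟩, h3, h4⟩ := h
    subst h1
    have ha : a ≠ 0 := fun h => h0 (h ▸ hq.1)
    have hb : b = b' := by
      have := mul_left_cancel₀ ha h3; exact this
    have hc : c = c' := mul_left_cancel₀ ha h4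
    simp [hb, hc]
lemma arith_key (mm nn pp s q M : ℝ) (hn : 2 ≤ nn) (hm2 : nn ≤ 2 * mm)
    (hpp : nn ^ 3 ≤ pp ^ 2) (hp0 : 0 < pp) (hm0 : 0 < mm)
    (hs0 : 0 ≤ s) (hq0 : 0 ≤ q) (hsM : s ≤ M) (hqM : q ≤ M)
    (main : mm ^ 3 * pp ≤ mm * s * q ^ 2 + Real.sqrt (mm * (pp * s)) * (pp * q)) :
    nn ^ 5 ≤ 128 * pp * M ^ 3 := by
  have hM0 : 0 ≤ M := le_trans hs0 hsM
  have hsqM : s * q ^ 2 ≤ M ^ 3 := by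
    have hq2 : q ^ 2 ≤ M ^ 2 := pow_le_pow_left₀ hq0 hqM 2
    calc s * q ^ 2 ≤ M * q ^ 2 := mul_le_mul_of_nonneg_right hsM (by positivity)
      _ ≤ M * M ^ 2 := mul_le_mul_of_nonneg_left hq2 hM0
      _ = M ^ 3 := by ring
  have hppM : pp * (s * q ^ 2) ≤ pp * M ^ 3 := mul_le_mul_of_nonneg_left hsqM (le_of_lt hp0)
  have hnn0 : (0:ℝ) ≤ nn := by linarith
  by_cases hcase : mm ^ 3 * pp / 2 ≤ mm * s * q ^ 2
  · -- main term dominates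
    have c1 : mm ^ 2 * pp / 2 ≤ s * q ^ 2 :=
      le_of_mul_le_mul_left (by nlinarith [hcase]) hm0
    have hnn2 : nn ^ 2 ≤ 4 * mm ^ 2 := by
      have := pow_le_pow_left₀ hnn0 hm2 2
      nlinarith [this]
    have h5 : nn ^ 5 ≤ pp ^ 2 * (4 * mm ^ 2) := by
      calc nn ^ 5 = nn ^ 3 * nn ^ 2 := by ring
        _ ≤ pp ^ 2 * (4 * mm ^ 2) := mul_le_mul hpp hnn2 (by positivity) (by positivity)
    have h6 : pp ^ 2 * (4 * mm ^ 2) = 8 * pp * (mm ^ 2 * pp / 2) := by ring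
    have h7 : 8 * pp * (mm ^ 2 * pp / 2) ≤ 8 * pp * M ^ 3 := by
      have := le_trans c1 hsqM
      nlinarith [this]
    have h8 : (0:ℝ) ≤ pp * M ^ 3 := by positivity
    linarith
  · push_neg at hcase
    have herr : mm ^ 3 * pp / 2 ≤ Real.sqrt (mm * (pp * s)) * (pp * q) := by linarith
    have hr2 : Real.sqrt (mm * (pp * s)) ^ 2 = mm * (pp * s) :=
      Real.sq_sqrt (by positivity)
    have hr0 : 0 ≤ Real.sqrt (mm * (pp * s)) := Real.sqrt_nonneg _
    have h2 : mm ^ 3 / 2 ≤ Real.sqrt (mm * (pp * s)) * q :=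
      le_of_mul_le_mul_left (by nlinarith [herr]) hp0
    have h3 : mm ^ 6 / 4 ≤ mm * (pp * s) * q ^ 2 := by
      nlinarith [mul_self_le_mul_self (show (0:ℝ) ≤ mm ^ 3 / 2 by positivity) h2, hr2]
    have h4 : mm ^ 5 / 4 ≤ pp * (s * q ^ 2) :=
      le_of_mul_le_mul_left (by nlinarith [h3]) hm0
    have h5 : nn ^ 5 ≤ 32 * mm ^ 5 := by
      have := pow_le_pow_left₀ hnn0 hm2 5
      nlinarith [this]
    linarith
lemma final_rpow (nn pp M : ℝ) (hn : 2 ≤ nn) (hp0 : 0 < pp) (hM0 : 0 ≤ M)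
    (key : nn ^ 5 ≤ 128 * pp * M ^ 3) :
    (Real.log 2 / 128) ^ ((1:ℝ)/3) *
      (nn ^ ((5:ℝ)/3) * pp ^ (-(1:ℝ)/3) * Real.log nn ^ (-(1:ℝ)/3)) ≤ M := by
  have hn0 : (0:ℝ) < nn := by linarith
  have hl2 : (0:ℝ) < Real.log 2 := Real.log_pos (by norm_num)
  have hL2 : Real.log 2 ≤ Real.log nn := Real.log_le_log (by norm_num) hn
  have hL0 : 0 < Real.log nn := lt_of_lt_of_le hl2 hL2
  set L := Real.log nn with hLdef
  have e1 : nn ^ ((5:ℝ)/3) = (nn ^ 5) ^ ((1:ℝ)/3) := by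
    rw [← Real.rpow_natCast nn 5, ← Real.rpow_mul hn0.le]
    norm_num
  have e2 : pp ^ (-(1:ℝ)/3) = (pp⁻¹) ^ ((1:ℝ)/3) := by
    rw [Real.inv_rpow hp0.le, ← Real.rpow_neg hp0.le]
    norm_num
  have e3 : L ^ (-(1:ℝ)/3) = (L⁻¹) ^ ((1:ℝ)/3) := by
    rw [Real.inv_rpow hL0.le, ← Real.rpow_neg hL0.le]
    norm_num
  have e4 : (Real.log 2 / 128) ^ ((1:ℝ)/3) * ((nn ^ 5) ^ ((1:ℝ)/3) * (pp⁻¹) ^ ((1:ℝ)/3)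
        * (L⁻¹) ^ ((1:ℝ)/3))
      = (Real.log 2 / 128 * (nn ^ 5 * pp⁻¹ * L⁻¹)) ^ ((1:ℝ)/3) := by
    rw [← Real.mul_rpow (by positivity) (by positivity),
        ← Real.mul_rpow (by positivity) (by positivity),
        ← Real.mul_rpow (by positivity) (by positivity)]
  rw [e1, e2, e3, e4]
  have hstep : Real.log 2 / 128 * (nn ^ 5 * pp⁻¹ * L⁻¹) ≤ M ^ 3 := by
    have hb1 : Real.log 2 / L ≤ 1 := (div_le_one hL0).mpr hL2
    have hb2 : nn ^ 5 / (128 * pp) ≤ M ^ 3 := by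
      rw [div_le_iff₀ (by positivity)]
      nlinarith [key]
    have hrw : Real.log 2 / 128 * (nn ^ 5 * pp⁻¹ * L⁻¹)
        = (nn ^ 5 / (128 * pp)) * (Real.log 2 / L) := by
      field_simp
    rw [hrw]
    calc (nn ^ 5 / (128 * pp)) * (Real.log 2 / L)
        ≤ (nn ^ 5 / (128 * pp)) * 1 := by
          exact mul_le_mul_of_nonneg_left hb1 (by positivity)
      _ = nn ^ 5 / (128 * pp) := by ring
      _ ≤ M ^ 3 := hb2
  calc (Real.log 2 / 128 * (nn ^ 5 * pp⁻¹ * L⁻¹)) ^ ((1:ℝ)/3)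
      ≤ (M ^ 3) ^ ((1:ℝ)/3) := Real.rpow_le_rpow (by positivity) hstep (by norm_num)
    _ = M := by
        rw [← Real.rpow_natCast M 3, ← Real.rpow_mul hM0]
        norm_num


end Aux

/-- If `1 < |A| < p^{2/3}` then
`max{|A+A|, |AA|} ≥ c |A|^{5/3} p^{-1/3} (log |A|)^{-1/3}`. -/
theorem sum_product_estimate_trig_small :
    ∃ c : ℝ, 0 < c ∧
      ∀ (p : ℕ), p.Prime → ∀ A : Finset (ZMod p),
        1 < A.card →
        (A.card : ℝ) < (p : ℝ) ^ ((2 : ℝ) / 3) →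
        c * ((A.card : ℝ) ^ ((5 : ℝ) / 3) * (p : ℝ) ^ (-(1 : ℝ) / 3) *
              Real.log (A.card : ℝ) ^ (-(1 : ℝ) / 3))
          ≤ max ((A + A).card : ℝ) ((A * A).card : ℝ) := by
  refine ⟨(Real.log 2 / 128) ^ ((1:ℝ)/3), ?_, ?_⟩
  · have : (0:ℝ) < Real.log 2 / 128 := by
      have := Real.log_pos (by norm_num : (1:ℝ) < 2); linarith
    exact Real.rpow_pos_of_pos this _
  intro p hp A hA hAp
  haveI : Fact p.Prime := ⟨hp⟩
  set ψ : AddChar (ZMod p) ℂ := AddChar.FiniteField.primitiveChar_to_Complex (ZMod p) with hψdef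
  have hψ : ψ.IsPrimitive := AddChar.FiniteField.primitiveChar_to_Complex_isPrimitive (ZMod p)
  set A' := A.erase 0 with hA'
  set S := A + A with hSdef
  set P := A * A with hPdef
  set nn := (A.card : ℝ) with hnn
  set mm := (A'.card : ℝ) with hmm
  set pp := (p : ℝ) with hppd
  set s := (S.card : ℝ) with hsd
  set q := (P.card : ℝ) with hqd
  have hp0 : (0:ℝ) < pp := by
    simp only [hppd]; exact_mod_cast hp.pos
  have hn2 : (2:ℝ) ≤ nn := by
    have h2 : 2 ≤ A.card := hA
    simp only [hnn]; exact_mod_cast h2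
  have hmN : A.card - 1 ≤ A'.card := Finset.pred_card_le_card_erase
  have hm2N : A.card ≤ 2 * A'.card := by omega
  have hm2 : nn ≤ 2 * mm := by
    simp only [hnn, hmm]; exact_mod_cast hm2N
  have hm0 : (0:ℝ) < mm := by
    have : 1 ≤ A'.card := by omega
    have := (Nat.one_le_cast (α := ℝ)).mpr this
    linarith
  have hm0N : 0 < A'.card := by omega
  -- closure properties
  have hSc : ∀ a ∈ A', ∀ b ∈ A', a + b ∈ S :=
    fun a ha b hb => Finset.add_mem_add (Finset.mem_of_mem_erase ha) (Finset.mem_of_mem_erase hb)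
  have hPc : ∀ a ∈ A', ∀ b ∈ A', a * b ∈ P :=
    fun a ha b hb => Finset.mul_mem_mul (Finset.mem_of_mem_erase ha) (Finset.mem_of_mem_erase hb)
  -- lower and upper bounds on the solution count
  have hlow := count_lower A' S P (Finset.notMem_erase 0 A) hSc hPc
  have hup := count_le hψ A' S P P
  have hsqrt : Real.sqrt ((p:ℝ) * P.card) * Real.sqrt ((p:ℝ) * P.card) = pp * q :=
    Real.mul_self_sqrt (by positivity)
  have main : mm ^ 3 * pp ≤ mm * s * q ^ 2 + Real.sqrt (mm * (pp * s)) * (pp * q) := by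
    have hlowR : (mm:ℝ) ^ 3 ≤ ((((A' ×ˢ S) ×ˢ P ×ˢ P).filter
        (fun t => t.1.1 * t.1.2 = t.2.1 + t.2.2)).card : ℝ) := by
      rw [hmm]; exact_mod_cast hlow
    have h1 : mm ^ 3 * pp ≤ ((((A' ×ˢ S) ×ˢ P ×ˢ P).filter
        (fun t => t.1.1 * t.1.2 = t.2.1 + t.2.2)).card : ℝ) * pp :=
      mul_le_mul_of_nonneg_right hlowR hp0.le
    calc mm ^ 3 * pp ≤ _ := h1
      _ ≤ (mm : ℝ) * s * q * q + Real.sqrt (mm * (pp * s)) *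
          (Real.sqrt (pp * q) * Real.sqrt (pp * q)) := hup
      _ = mm * s * q ^ 2 + Real.sqrt (mm * (pp * s)) * (pp * q) := by
          rw [Real.mul_self_sqrt (show (0:ℝ) ≤ pp * q by positivity)]; ring
  -- p is large: nn^3 ≤ pp^2
  have hpp2 : nn ^ 3 ≤ pp ^ 2 := by
    have hnn0 : (0:ℝ) ≤ nn := by linarith
    have h1 : nn ^ (3:ℝ) < (pp ^ ((2:ℝ)/3)) ^ (3:ℝ) :=
      Real.rpow_lt_rpow hnn0 hAp (by norm_num)
    rw [← Real.rpow_mul hp0.le] at h1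
    rw [show ((2:ℝ)/3*(3:ℝ)) = ((2:ℕ):ℝ) by norm_num, Real.rpow_natCast] at h1
    rw [show (3:ℝ) = ((3:ℕ):ℝ) by norm_num, Real.rpow_natCast] at h1
    exact h1.le
  have hkey := arith_key mm nn pp s q (max s q) hn2 hm2 hpp2 hp0 hm0
    (by positivity) (by positivity) (le_max_left _ _) (le_max_right _ _) main
  have := final_rpow nn pp (max s q) hn2 hp0
    (le_trans (by positivity) (le_max_left s q)) hkey
  exact this
end

section
/- Let p be a prime and let A₁ be a subset of F_p with 1 < |A₁| < p^{1/2}. Then there exist elements a₁, a₂, b₁, b₂ ∈ A₁ with a₁ ≠ a₂ such that |(a₁−a₂)*A₁ + (a₁−a₂)*A₁ + (b₁−b₂)*A₁| ≥ 0.5 |A₁|². -/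
open Pointwise

private lemma gk_sq_lt {p n : ℕ} (hp : p.Prime) (h2 : (n : ℝ) < (p : ℝ) ^ ((1 : ℝ) / 2)) :
    n ^ 2 < p := by
  have hp0 : (0 : ℝ) < (p : ℝ) := by exact_mod_cast hp.pos
  have h0 : (0 : ℝ) ≤ (n : ℝ) := Nat.cast_nonneg n
  have hlt : (n : ℝ) * n < (p : ℝ) ^ ((1 : ℝ) / 2) * ((p : ℝ) ^ ((1 : ℝ) / 2)) :=
    mul_lt_mul'' h2 h2 h0 h0
  rw [← Real.rpow_add hp0] at hlt
  norm_num at hlt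
  have : (n : ℝ) ^ 2 < (p : ℝ) := by nlinarith
  exact_mod_cast this

/-- Glibichuk–Konyagin lemma for small sets. -/
theorem glibichuk_konyagin_small (p : ℕ) (hp : p.Prime) (A₁ : Finset (ZMod p))
    (h1 : 1 < A₁.card) (h2 : (A₁.card : ℝ) < (p : ℝ) ^ ((1 : ℝ) / 2)) :
    ∃ a₁ ∈ A₁, ∃ a₂ ∈ A₁, ∃ b₁ ∈ A₁, ∃ b₂ ∈ A₁, a₁ ≠ a₂ ∧
      (0.5 : ℝ) * (A₁.card : ℝ) ^ 2 ≤
        (((a₁ - a₂) • A₁ + (a₁ - a₂) • A₁ + (b₁ - b₂) • A₁).card : ℝ) := by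
  classical
  haveI : Fact p.Prime := ⟨hp⟩
  obtain ⟨u, hu, v, hv, huv⟩ := Finset.one_lt_card.mp h1
  have hn2 : A₁.card ^ 2 < p := gk_sq_lt hp h2
  set n := A₁.card with hndef
  -- the set of representable ratios
  set Q : ZMod p → Prop := fun ξ =>
    ∃ a₁ ∈ A₁, ∃ a₂ ∈ A₁, ∃ b₁ ∈ A₁, ∃ b₂ ∈ A₁, a₁ ≠ a₂ ∧ b₁ - b₂ = ξ * (a₁ - a₂)
    with hQdef
  have hQ0 : Q 0 := ⟨u, hu, v, hv, u, hu, u, hu, huv, by ring⟩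
  by_cases hall : ∀ ξ : ZMod p, Q ξ
  · -- Case B : all ratios representable; averaging argument
    set M : ZMod p → Finset ((ZMod p × ZMod p) × ZMod p × ZMod p) := fun ξ =>
      ((A₁ ×ˢ A₁) ×ˢ A₁ ×ˢ A₁).filter fun x =>
        x.1.1 ≠ x.1.2 ∧ x.1.1 + ξ * x.2.1 = x.1.2 + ξ * x.2.2 with hMdef
    have hdisj : ∀ ξ₁ ∈ Finset.univ.erase (0 : ZMod p), ∀ ξ₂ ∈ Finset.univ.erase (0 : ZMod p),
        ξ₁ ≠ ξ₂ → Disjoint (M ξ₁) (M ξ₂) := by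
      intro ξ₁ _ ξ₂ _ hne
      rw [Finset.disjoint_left]
      intro x hx1 hx2
      rw [hMdef] at hx1 hx2
      simp only [Finset.mem_filter] at hx1 hx2
      obtain ⟨-, hne1, he1⟩ := hx1
      obtain ⟨-, -, he2⟩ := hx2
      have hy : x.2.2 ≠ x.2.1 := by
        intro h
        rw [h] at he1
        exact hne1 (add_right_cancel he1)
      apply hne
      have h1' : ξ₁ * (x.2.2 - x.2.1) = x.1.1 - x.1.2 := by linear_combination -he1
      have h2' : ξ₂ * (x.2.2 - x.2.1) = x.1.1 - x.1.2 := by linear_combination -he2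
      have := h1'.trans h2'.symm
      exact mul_right_cancel₀ (sub_ne_zero.mpr hy) this
    have hsum : ∑ ξ ∈ Finset.univ.erase (0 : ZMod p), (M ξ).card ≤ n ^ 2 * n ^ 2 := by
      rw [← Finset.card_biUnion hdisj]
      calc ((Finset.univ.erase (0 : ZMod p)).biUnion M).card
          ≤ ((A₁ ×ˢ A₁) ×ˢ A₁ ×ˢ A₁).card := by
            apply Finset.card_le_card
            apply Finset.biUnion_subset.mpr
            intro ξ _
            rw [hMdef]
            exact Finset.filter_subset _ _
        _ = n ^ 2 * n ^ 2 := by simp [Finset.card_product]; ring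
    have hcard_erase : (Finset.univ.erase (0 : ZMod p)).card = p - 1 := by
      rw [Finset.card_erase_of_mem (Finset.mem_univ _), Finset.card_univ, ZMod.card]
    have hex2 : ∃ ξ ∈ Finset.univ.erase (0 : ZMod p), (M ξ).card ≤ n ^ 2 := by
      by_contra hcon
      push_neg at hcon
      have hge : (p - 1) * (n ^ 2 + 1) ≤ ∑ ξ ∈ Finset.univ.erase (0 : ZMod p), (M ξ).card := by
        rw [← hcard_erase]
        calc (Finset.univ.erase (0 : ZMod p)).card * (n ^ 2 + 1)
            = ∑ _ξ ∈ Finset.univ.erase (0 : ZMod p), (n ^ 2 + 1) := by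
              rw [Finset.sum_const, smul_eq_mul]
          _ ≤ _ := Finset.sum_le_sum fun ξ hξ => hcon ξ hξ
      have hp1 : n ^ 2 ≤ p - 1 := by omega
      have : (p - 1) * (n ^ 2 + 1) ≤ n ^ 2 * n ^ 2 := le_trans hge hsum
      nlinarith [Nat.one_le_iff_ne_zero.mpr (by positivity : n ^ 2 ≠ 0)]
    obtain ⟨ξ₁, hξ₁mem, hMle⟩ := hex2
    have hξ₁ne : ξ₁ ≠ 0 := (Finset.mem_erase.mp hξ₁mem).1
    obtain ⟨a₁, ha₁, a₂, ha₂, b₁, hb₁, b₂, hb₂, hne, heq⟩ := hall ξ₁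
    refine ⟨a₁, ha₁, a₂, ha₂, b₁, hb₁, b₂, hb₂, hne, ?_⟩
    set c := a₁ - a₂ with hcdef
    have hc : c ≠ 0 := sub_ne_zero.mpr hne
    set B : Finset (ZMod p) := ξ₁ • A₁ with hBdef
    have hBcard : B.card = n := by
      rw [hBdef, Finset.smul_finset_def]
      exact Finset.card_image_of_injective _ (fun x y h => by
        simpa using mul_left_cancel₀ hξ₁ne (by simpa [smul_eq_mul] using h))
    -- energy bound
    set T : Finset ((ZMod p × ZMod p) × ZMod p × ZMod p) :=
      ((A₁ ×ˢ A₁) ×ˢ B ×ˢ B).filter fun x => x.1.1 + x.2.1 = x.1.2 + x.2.2 with hTdef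
    have hT : Finset.addEnergy A₁ B = T.card := rfl
    have hsplit := Finset.card_filter_add_card_filter_not
      (s := T) (p := fun x => x.1.1 = x.1.2)
    have hT1 : (T.filter fun x => x.1.1 = x.1.2).card ≤ n ^ 2 := by
      have : (A₁ ×ˢ B).card = n ^ 2 := by rw [Finset.card_product, hBcard]; ring
      rw [← this]
      apply Finset.card_le_card_of_injOn (fun x => (x.1.1, x.2.1))
      · intro x hx
        simp only [Finset.mem_coe, Finset.mem_filter, hTdef, Finset.mem_product] at hx
        exact Finset.mem_product.mpr ⟨hx.1.1.1.1, hx.1.1.2.1⟩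
      · intro x hx y hy hxy
        simp only [Finset.coe_filter, Set.mem_setOf_eq, hTdef, Finset.mem_filter] at hx hy
        obtain ⟨⟨-, he1⟩, hd1⟩ := hx
        obtain ⟨⟨-, he2⟩, hd2⟩ := hy
        have h11 : x.1.1 = y.1.1 := (Prod.ext_iff.mp hxy).1
        have h21 : x.2.1 = y.2.1 := (Prod.ext_iff.mp hxy).2
        have h12 : x.1.2 = y.1.2 := hd1.symm.trans (h11.trans hd2)
        have hx22 : x.2.2 = x.2.1 := by
          rw [hd1] at he1; exact (add_left_cancel he1).symm
        have hy22 : y.2.2 = y.2.1 := by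
          rw [hd2] at he2; exact (add_left_cancel he2).symm
        have h22 : x.2.2 = y.2.2 := by rw [hx22, hy22, h21]
        exact Prod.ext (Prod.ext h11 h12) (Prod.ext h21 h22)
    have hT2 : (T.filter fun x => ¬ x.1.1 = x.1.2).card ≤ (M ξ₁).card := by
      apply Finset.card_le_card_of_injOn
        (fun x => ((x.1.1, x.1.2), (ξ₁⁻¹ * x.2.1, ξ₁⁻¹ * x.2.2)))
      · intro x hx
        simp only [Finset.mem_coe, Finset.mem_filter, hTdef, Finset.mem_product] at hx
        obtain ⟨⟨⟨⟨m11, m12⟩, mB1, mB2⟩, heqx⟩, hnex⟩ := hx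
        obtain ⟨y1, hy1, hy1e⟩ := Finset.mem_smul_finset.mp mB1
        obtain ⟨y2, hy2, hy2e⟩ := Finset.mem_smul_finset.mp mB2
        rw [smul_eq_mul] at hy1e hy2e
        rw [hMdef]
        simp only [Finset.mem_coe, Finset.mem_filter, Finset.mem_product]
        refine ⟨⟨⟨m11, m12⟩, ?_, ?_⟩, hnex, ?_⟩
        · rw [← hy1e, ← mul_assoc, inv_mul_cancel₀ hξ₁ne, one_mul]; exact hy1
        · rw [← hy2e, ← mul_assoc, inv_mul_cancel₀ hξ₁ne, one_mul]; exact hy2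
        · rw [← mul_assoc, ← mul_assoc, mul_inv_cancel₀ hξ₁ne, one_mul, one_mul]
          exact heqx
      · intro x hx y hy hxy
        simp only [Prod.mk.injEq] at hxy
        obtain ⟨⟨e11, e12⟩, e21, e22⟩ := hxy
        have f21 : x.2.1 = y.2.1 := by
          have := mul_left_cancel₀ (inv_ne_zero hξ₁ne) e21; exact this
        have f22 : x.2.2 = y.2.2 := mul_left_cancel₀ (inv_ne_zero hξ₁ne) e22
        exact Prod.ext (Prod.ext e11 e12) (Prod.ext f21 f22)
    have hE : Finset.addEnergy A₁ B ≤ 2 * n ^ 2 := by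
      rw [hT, ← hsplit]
      have := hT2.trans hMle
      omega
    have hCS := Finset.le_card_add_mul_addEnergy A₁ B
    rw [hBcard] at hCS
    have hABcard : n ^ 2 ≤ 2 * (A₁ + B).card := by
      have h4 : n ^ 2 * n ^ 2 ≤ (A₁ + B).card * (2 * n ^ 2) :=
        le_trans hCS (Nat.mul_le_mul_left _ hE)
      have hn2pos : 0 < n ^ 2 := by positivity
      nlinarith [h4, hn2pos]
    -- embed A₁ + B into the target set
    have hfinal : (A₁ + B).card ≤ ((c • A₁ + c • A₁ + (b₁ - b₂) • A₁)).card := by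
      apply Finset.card_le_card_of_injOn (fun t => c * t + c * a₂)
      · intro t ht
        obtain ⟨x, hx, b, hb, rfl⟩ := Finset.mem_add.mp ht
        obtain ⟨y, hy, rfl⟩ := Finset.mem_smul_finset.mp hb
        rw [smul_eq_mul]
        have hmem : c * x ∈ c • A₁ := by
          rw [← smul_eq_mul]; exact Finset.smul_mem_smul_finset hx
        have hmem2 : c * a₂ ∈ c • A₁ := by
          rw [← smul_eq_mul]; exact Finset.smul_mem_smul_finset ha₂
        have hmem3 : (b₁ - b₂) * y ∈ (b₁ - b₂) • A₁ := by
          rw [← smul_eq_mul]; exact Finset.smul_mem_smul_finset hy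
        have : c * (x + ξ₁ * y) + c * a₂ = (c * x + c * a₂) + (b₁ - b₂) * y := by
          rw [heq]; ring
        simp only [Finset.mem_coe]; rw [this]
        exact Finset.add_mem_add (Finset.add_mem_add hmem hmem2) hmem3
      · intro x _ y _ hxy
        have := add_right_cancel hxy
        exact mul_left_cancel₀ hc this
    have hle : n ^ 2 ≤ 2 * ((c • A₁ + c • A₁ + (b₁ - b₂) • A₁)).card :=
      le_trans hABcard (by omega)
    have : (n : ℝ) ^ 2 ≤ 2 * (((c • A₁ + c • A₁ + (b₁ - b₂) • A₁)).card : ℝ) := by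
      exact_mod_cast hle
    rw [hcdef] at this
    norm_num
    linarith
  · -- Case A: some ratio not representable
    push_neg at hall
    obtain ⟨ξ₀, hξ₀⟩ := hall
    have hexk : ∃ k : ℕ, ¬ Q ((k : ZMod p)) :=
      ⟨ξ₀.val, by rwa [ZMod.natCast_rightInverse ξ₀]⟩
    set k₀ := Nat.find hexk with hk₀def
    have hk₀spec : ¬ Q ((k₀ : ZMod p)) := Nat.find_spec hexk
    have hk₀pos : 0 < k₀ := by
      rcases Nat.eq_zero_or_pos k₀ with h | h
      · exact absurd (by rw [h]; simpa using hQ0) hk₀spec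
      · exact h
    set q : ZMod p := ((k₀ - 1 : ℕ) : ZMod p) with hqdef
    have hq : Q q := not_not.mp (Nat.find_min hexk (Nat.pred_lt hk₀pos.ne'))
    have hq1 : ¬ Q (q + 1) := by
      have hsumq : q + 1 = ((k₀ : ℕ) : ZMod p) := by
        rw [hqdef]
        have h' : ((k₀ - 1 + 1 : ℕ) : ZMod p) = ((k₀ : ℕ) : ZMod p) := by
          rw [Nat.sub_add_cancel hk₀pos]
        push_cast at h'
        exact_mod_cast h'
      rw [hsumq]
      exact hk₀spec
    obtain ⟨a₁, ha₁, a₂, ha₂, b₁, hb₁, b₂, hb₂, hne, heq⟩ := hq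
    refine ⟨a₁, ha₁, a₂, ha₂, b₁, hb₁, b₂, hb₂, hne, ?_⟩
    set c := a₁ - a₂ with hcdef
    have hc : c ≠ 0 := sub_ne_zero.mpr hne
    have hcount : n ^ 2 ≤ ((c • A₁ + c • A₁ + (b₁ - b₂) • A₁)).card := by
      have hcardsq : (A₁ ×ˢ A₁).card = n ^ 2 := by rw [Finset.card_product]; ring
      rw [← hcardsq]
      apply Finset.card_le_card_of_injOn (fun t => c * t.1 + c * t.2 + (b₁ - b₂) * t.2)
      · intro t ht
        rw [Finset.mem_coe, Finset.mem_product] at ht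
        have hmem : c * t.1 ∈ c • A₁ := by
          rw [← smul_eq_mul]; exact Finset.smul_mem_smul_finset ht.1
        have hmem2 : c * t.2 ∈ c • A₁ := by
          rw [← smul_eq_mul]; exact Finset.smul_mem_smul_finset ht.2
        have hmem3 : (b₁ - b₂) * t.2 ∈ (b₁ - b₂) • A₁ := by
          rw [← smul_eq_mul]; exact Finset.smul_mem_smul_finset ht.2
        exact Finset.add_mem_add (Finset.add_mem_add hmem hmem2) hmem3
      · intro t ht t' ht' hf
        simp only [Finset.coe_product, Set.mem_prod, Finset.mem_coe] at ht ht'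
        have hf' : t.1 + (q + 1) * t.2 = t'.1 + (q + 1) * t'.2 := by
          apply mul_left_cancel₀ hc
          have e1 : c * (t.1 + (q + 1) * t.2) = c * t.1 + c * t.2 + (b₁ - b₂) * t.2 := by
            rw [heq]; ring
          have e2 : c * (t'.1 + (q + 1) * t'.2) = c * t'.1 + c * t'.2 + (b₁ - b₂) * t'.2 := by
            rw [heq]; ring
          rw [e1, e2]; exact hf
        by_cases h22 : t.2 = t'.2
        · have h11 : t.1 = t'.1 := by
            rw [h22] at hf'
            exact add_right_cancel hf'
          exact Prod.ext h11 h22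
        · exfalso
          apply hq1
          exact ⟨t'.2, ht'.2, t.2, ht.2, t.1, ht.1, t'.1, ht'.1, fun h => h22 h.symm,
            by linear_combination hf'⟩
    have : (n : ℝ) ^ 2 ≤ (((c • A₁ + c • A₁ + (b₁ - b₂) • A₁)).card : ℝ) := by
      exact_mod_cast hcount
    rw [hcdef] at this
    norm_num
    nlinarith [sq_nonneg (n : ℝ)]
end

section
/- Let p be a prime and let A₁ be a subset of F_p with |A₁| > p^{1/2}. Then there exist elements a₁, a₂, b₁, b₂ ∈ A₁ such that |(a₁−a₂)*A₁ + (b₁−b₂)*A₁| ≥ 0.5 p. -/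
open Pointwise Finset

lemma count_sum (p : ℕ) [NeZero p] [Fact p.Prime] (A : Finset (ZMod p)) :
    ∑ ξ : ZMod p, (((A ×ˢ A) ×ˢ A ×ˢ A).filter fun x =>
        x.1.1 + ξ * x.2.1 = x.1.2 + ξ * x.2.2).card
      = p * (A.card * A.card) + (A.card * A.card) * (A.card * A.card - A.card) := by
  set Q := (A ×ˢ A) ×ˢ A ×ˢ A with hQ
  have step1 : ∑ ξ : ZMod p, (Q.filter fun x =>
        x.1.1 + ξ * x.2.1 = x.1.2 + ξ * x.2.2).card
      = ∑ x ∈ Q, (Finset.univ.filter fun ξ : ZMod p =>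
        x.1.1 + ξ * x.2.1 = x.1.2 + ξ * x.2.2).card := by
    simp_rw [card_filter]
    rw [Finset.sum_comm]
  rw [step1]
  rw [← Finset.sum_filter_add_sum_filter_not Q (fun x => x.2.1 = x.2.2)]
  have h1 : ∑ x ∈ Q.filter (fun x => x.2.1 = x.2.2),
      (Finset.univ.filter fun ξ : ZMod p =>
        x.1.1 + ξ * x.2.1 = x.1.2 + ξ * x.2.2).card = p * (A.card * A.card) := by
    have key : ∀ x ∈ Q.filter (fun x => x.2.1 = x.2.2),
        (Finset.univ.filter fun ξ : ZMod p =>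
          x.1.1 + ξ * x.2.1 = x.1.2 + ξ * x.2.2).card
        = if x.1.1 = x.1.2 then p else 0 := by
      rintro ⟨⟨a₁, a₂⟩, c₁, c₂⟩ hx
      simp only [mem_filter] at hx
      obtain ⟨-, rfl⟩ := hx
      by_cases hA : a₁ = a₂
      · subst hA
        simp [Finset.filter_true_of_mem, ZMod.card]
      · simp only [if_neg hA]
        rw [Finset.card_eq_zero, Finset.filter_eq_empty_iff]
        intro ξ _
        simpa using hA
    rw [Finset.sum_congr rfl key, ← Finset.sum_filter, Finset.filter_filter]
    have : Q.filter (fun x => x.2.1 = x.2.2 ∧ x.1.1 = x.1.2)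
        = A.diag ×ˢ A.diag := by
      ext ⟨⟨a₁, a₂⟩, c₁, c₂⟩
      simp only [hQ, Finset.mem_filter, Finset.mem_product, Finset.mem_diag]
      constructor
      · rintro ⟨⟨⟨h1, h2⟩, h3, h4⟩, h5, h6⟩; subst h5 h6; tauto
      · rintro ⟨⟨h1, h2⟩, h3, h4⟩; subst h2 h4; tauto
    rw [this]
    simp [Finset.diag_card, mul_comm]
  have h2 : ∑ x ∈ Q.filter (fun x => ¬ x.2.1 = x.2.2),
      (Finset.univ.filter fun ξ : ZMod p =>
        x.1.1 + ξ * x.2.1 = x.1.2 + ξ * x.2.2).card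
        = (A.card * A.card) * (A.card * A.card - A.card) := by
    have key : ∀ x ∈ Q.filter (fun x => ¬ x.2.1 = x.2.2),
        (Finset.univ.filter fun ξ : ZMod p =>
          x.1.1 + ξ * x.2.1 = x.1.2 + ξ * x.2.2).card = 1 := by
      rintro ⟨⟨a₁, a₂⟩, c₁, c₂⟩ hx
      simp only [mem_filter] at hx
      obtain ⟨-, hc⟩ := hx
      have hc' : (c₁ : ZMod p) - c₂ ≠ 0 := sub_ne_zero.2 hc
      have : (Finset.univ.filter fun ξ : ZMod p =>
          a₁ + ξ * c₁ = a₂ + ξ * c₂) = {(a₂ - a₁) / (c₁ - c₂)} := by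
        ext ξ
        simp only [Finset.mem_filter, Finset.mem_univ, true_and, Finset.mem_singleton]
        rw [eq_div_iff hc']
        constructor
        · intro h; ring_nf; linear_combination h
        · intro h; linear_combination h
      rw [this, Finset.card_singleton]
    rw [Finset.sum_congr rfl key]
    rw [Finset.sum_const, smul_eq_mul, mul_one]
    have : Q.filter (fun x => ¬ x.2.1 = x.2.2) = (A ×ˢ A) ×ˢ A.offDiag := by
      ext ⟨⟨a₁, a₂⟩, c₁, c₂⟩
      simp only [hQ, Finset.mem_filter, Finset.mem_product, Finset.mem_offDiag]
      tauto
    rw [this, Finset.card_product, Finset.card_product, Finset.offDiag_card]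
  rw [h1, h2]


lemma count_zero (p : ℕ) [NeZero p] (A : Finset (ZMod p)) :
    (((A ×ˢ A) ×ˢ A ×ˢ A).filter fun x =>
      x.1.1 + (0 : ZMod p) * x.2.1 = x.1.2 + 0 * x.2.2).card = A.card * (A.card * A.card) := by
  have : (((A ×ˢ A) ×ˢ A ×ˢ A).filter fun x =>
      x.1.1 + (0 : ZMod p) * x.2.1 = x.1.2 + 0 * x.2.2) = A.diag ×ˢ (A ×ˢ A) := by
    ext ⟨⟨a₁, a₂⟩, c₁, c₂⟩
    simp only [Finset.mem_filter, Finset.mem_product, Finset.mem_diag, zero_mul, add_zero]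
    constructor
    · rintro ⟨⟨⟨h1, h2⟩, h3, h4⟩, h5⟩; subst h5; tauto
    · rintro ⟨⟨h1, h2⟩, h3, h4⟩; subst h2; tauto
  rw [this, Finset.card_product, Finset.card_product, Finset.diag_card]

lemma card_smul_finset' (p : ℕ) [Fact p.Prime] (ξ : ZMod p) (hξ : ξ ≠ 0)
    (A : Finset (ZMod p)) : (ξ • A).card = A.card := by
  rw [Finset.smul_finset_def]
  exact Finset.card_image_of_injective _ (MulAction.injective₀ hξ)

lemma energy_le (p : ℕ) [Fact p.Prime] (ξ : ZMod p) (hξ : ξ ≠ 0) (A : Finset (ZMod p)) :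
    Finset.addEnergy A (ξ • A) ≤ (((A ×ˢ A) ×ˢ A ×ˢ A).filter fun x =>
      x.1.1 + ξ * x.2.1 = x.1.2 + ξ * x.2.2).card := by
  rw [Finset.addEnergy]
  apply Finset.card_le_card_of_injOn
    (fun x => ((x.1.1, x.1.2), (ξ⁻¹ * x.2.1, ξ⁻¹ * x.2.2)))
  · rintro ⟨⟨a₁, a₂⟩, b₁, b₂⟩ hx
    simp only [Finset.mem_coe, Finset.mem_filter, Finset.mem_product] at hx ⊢
    obtain ⟨⟨⟨h1, h2⟩, h3, h4⟩, h5⟩ := hx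
    rw [Finset.mem_smul_finset] at h3 h4
    obtain ⟨c₁, hc₁, rfl⟩ := h3
    obtain ⟨c₂, hc₂, rfl⟩ := h4
    simp only [smul_eq_mul] at *
    rw [inv_mul_cancel_left₀ hξ, inv_mul_cancel_left₀ hξ]
    exact ⟨⟨⟨h1, h2⟩, hc₁, hc₂⟩, h5⟩
  · rintro ⟨⟨a₁, a₂⟩, b₁, b₂⟩ - ⟨⟨a₁', a₂'⟩, b₁', b₂'⟩ - h
    simp only [Prod.mk.injEq] at h ⊢
    obtain ⟨⟨h1, h2⟩, h3, h4⟩ := h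
    exact ⟨⟨h1, h2⟩, mul_left_cancel₀ (inv_ne_zero hξ) h3,
      mul_left_cancel₀ (inv_ne_zero hξ) h4⟩

lemma exists_good (p : ℕ) [NeZero p] [Fact p.Prime] (A : Finset (ZMod p))
    (hA : p < A.card * A.card) :
    ∃ ξ : ZMod p, ξ ≠ 0 ∧ p ≤ 2 * (A + ξ • A).card := by
  classical
  have hp : p.Prime := Fact.out
  set a := A.card with ha_def
  have ha1 : 1 ≤ a := by
    rcases Nat.eq_zero_or_pos a with h | h
    · rw [h] at hA; omega
    · exact h
  set N : ZMod p → ℕ := fun ξ => (((A ×ˢ A) ×ˢ A ×ˢ A).filter fun x =>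
      x.1.1 + ξ * x.2.1 = x.1.2 + ξ * x.2.2).card with hN_def
  -- sum over nonzero ξ
  have htot : ∑ ξ : ZMod p, N ξ = p * (a * a) + (a * a) * (a * a - a) := count_sum p A
  have hzero : N 0 = a * (a * a) := count_zero p A
  have herase : ∑ ξ ∈ Finset.univ.erase (0 : ZMod p), N ξ + N 0 = ∑ ξ : ZMod p, N ξ :=
    Finset.sum_erase_add _ _ (Finset.mem_univ _)
  -- pigeonhole: minimum
  have hcard_univ : (Finset.univ : Finset (ZMod p)).card = p := ZMod.card p
  have hcard_erase : (Finset.univ.erase (0 : ZMod p)).card = p - 1 := by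
    rw [Finset.card_erase_of_mem (Finset.mem_univ _), hcard_univ]
  have hne : (Finset.univ.erase (0 : ZMod p)).Nonempty := by
    rw [← Finset.card_pos, hcard_erase]
    have := hp.two_le
    omega
  obtain ⟨ξ, hξmem, hmin⟩ := Finset.exists_min_image _ N hne
  have hξ0 : ξ ≠ 0 := (Finset.mem_erase.1 hξmem).1
  refine ⟨ξ, hξ0, ?_⟩
  have hpigeon : (p - 1) * N ξ ≤ ∑ ξ' ∈ Finset.univ.erase (0 : ZMod p), N ξ' := by
    rw [← hcard_erase]
    simpa using Finset.card_nsmul_le_sum _ _ _ hmin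
  -- Cauchy-Schwarz
  have hCS : a ^ 2 * a ^ 2 ≤ (A + ξ • A).card * N ξ := by
    have := Finset.le_card_add_mul_addEnergy A (ξ • A)
    rw [card_smul_finset' p ξ hξ0] at this
    exact this.trans (Nat.mul_le_mul_left _ (energy_le p ξ hξ0 A))
  -- conclude
  by_contra hcon
  push_neg at hcon
  set s := (A + ξ • A).card with hs_def
  set n := N ξ with hn_def
  have haa : a ≤ a * a := Nat.le_mul_of_pos_left a (by omega)
  have h2 : (a * a) * (a * a - a) + (a * a) * a = (a * a) * (a * a) := by
    rw [← Nat.mul_add]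
    congr 1
    omega
  have h1 : (p - 1) * n + N 0 ≤ ∑ ξ' : ZMod p, N ξ' := by
    rw [← herase]
    exact Nat.add_le_add_right hpigeon _
  rw [htot, hzero] at h1
  have hV : a * (a * a) = (a * a) * a := by ring
  have key : (p - 1) * n + 2 * (a * (a * a)) ≤ p * (a * a) + (a * a) * (a * a) := by
    omega
  have hps : 2 * s + 1 ≤ p := hcon
  have hp2 := hp.two_le
  clear_value s n
  clear hmin hpigeon htot herase hzero h1 h2 hV hcon hξmem hne hcard_erase hcard_univ hN_def hn_def hs_def
  -- cast to ℤ
  have hsub : ((p - 1 : ℕ) : ℤ) = (p : ℤ) - 1 := by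
    have : 1 ≤ p := by omega
    push_cast [this]
    ring
  have keyZ : ((p : ℤ) - 1) * n + 2 * ((a:ℤ) * (a * a)) ≤ p * (a * a) + (a * a) * (a * a) := by
    rw [← hsub]
    exact_mod_cast key
  have hCSZ : (a:ℤ) ^ 2 * (a:ℤ) ^ 2 ≤ (s:ℤ) * n := by exact_mod_cast hCS
  have hpsZ : 2 * (s:ℤ) + 1 ≤ p := by exact_mod_cast hps
  have hAZ : (p:ℤ) < (a:ℤ) * a := by exact_mod_cast hA
  have ha1Z : (1:ℤ) ≤ a := by exact_mod_cast ha1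
  have hn0 : (0:ℤ) ≤ n := Int.natCast_nonneg n
  have h3 : (0:ℤ) ≤ ((p:ℤ) - 1 - 2 * s) * n := mul_nonneg (by linarith) hn0
  have h4 : (p:ℤ) * (a * a) ≤ ((a:ℤ) * a - 1) * (a * a) :=
    mul_le_mul_of_nonneg_right (by linarith) (by positivity)
  nlinarith [h3, h4, hCSZ, keyZ, ha1Z, sq_nonneg ((a:ℤ))]

/-- Lemma for large sets: if `|A₁| > p^{1/2}` then some dilate sum covers half of `F_p`. -/
theorem dilate_sum_large (p : ℕ) (hp : p.Prime) (A₁ : Finset (ZMod p))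
    (h : (p : ℝ) ^ ((1 : ℝ) / 2) < (A₁.card : ℝ)) :
    ∃ a₁ ∈ A₁, ∃ a₂ ∈ A₁, ∃ b₁ ∈ A₁, ∃ b₂ ∈ A₁,
      (0.5 : ℝ) * (p : ℝ) ≤ (((a₁ - a₂) • A₁ + (b₁ - b₂) • A₁).card : ℝ) := by
  haveI : Fact p.Prime := ⟨hp⟩
  haveI : NeZero p := ⟨hp.pos.ne'⟩
  -- convert hypothesis to `p < |A₁|²`
  have h0 : (0:ℝ) ≤ (p:ℝ) := Nat.cast_nonneg p
  have hx : ((p:ℝ) ^ ((1:ℝ)/2)) ^ 2 = (p:ℝ) := by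
    rw [← Real.rpow_natCast ((p:ℝ) ^ ((1:ℝ)/2)) 2, ← Real.rpow_mul h0]
    norm_num
  have hR : (p:ℝ) < (A₁.card : ℝ) ^ 2 := by
    calc (p:ℝ) = ((p:ℝ) ^ ((1:ℝ)/2)) ^ 2 := hx.symm
    _ < (A₁.card : ℝ) ^ 2 := by
        apply pow_lt_pow_left₀ h (Real.rpow_nonneg h0 _)
        norm_num
  have hA : p < A₁.card * A₁.card := by
    rw [sq] at hR
    exact_mod_cast hR
  obtain ⟨ξ, hξ0, hge⟩ := exists_good p A₁ hA
  -- collision argument: ξ = (b₁ - b₂)/(a₁ - a₂)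
  have hcardlt : (Finset.univ : Finset (ZMod p)).card < (A₁ ×ˢ A₁).card := by
    rw [Finset.card_product, Finset.card_univ, ZMod.card]
    exact hA
  obtain ⟨x, hx1, y, hy1, hxy, hf⟩ :=
    Finset.exists_ne_map_eq_of_card_lt_of_maps_to hcardlt
      (f := fun z : ZMod p × ZMod p => ξ * z.1 - z.2)
      (fun z _ => Finset.mem_univ _)
  rw [Finset.mem_product] at hx1 hy1
  have ha12 : x.1 ≠ y.1 := by
    intro he
    apply hxy
    have : x.2 = y.2 := by
      rw [he] at hf
      linear_combination -hf
    exact Prod.ext he this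
  refine ⟨x.1, hx1.1, y.1, hy1.1, x.2, hx1.2, y.2, hy1.2, ?_⟩
  have hd : x.1 - y.1 ≠ 0 := sub_ne_zero.2 ha12
  have hbb : x.2 - y.2 = (x.1 - y.1) * ξ := by linear_combination -hf
  have hset : (x.1 - y.1) • A₁ + (x.2 - y.2) • A₁ = (x.1 - y.1) • (A₁ + ξ • A₁) := by
    rw [hbb, smul_add, smul_smul]
  rw [hset, card_smul_finset' p _ hd]
  have : (p : ℝ) ≤ 2 * ((A₁ + ξ • A₁).card : ℝ) := by exact_mod_cast hge
  linarith
end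

section
/- Let X, B₁, …, B_k be nonempty finite subsets of F_p. Then |B₁ + … + B_k| · |X|^{k−1} ≤ |X+B₁| · |X+B₂| ⋯ |X+B_k|. -/
open Pointwise Finset Fintype

section aux
variable {G : Type*} [AddCommGroup G] [DecidableEq G]

/-- A sum of finsets, each contained in `B`, is contained in `card • B`. -/
lemma sum_subset_card_nsmul {ι : Type*} [DecidableEq ι] (s : Finset ι) (f : ι → Finset G)
    (B : Finset G) (h : ∀ i ∈ s, f i ⊆ B) : ∑ i ∈ s, f i ⊆ s.card • B := by
  induction s using Finset.induction_on with
  | empty => simp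
  | @insert a s ha ih =>
      rw [Finset.sum_insert ha, Finset.card_insert_of_notMem ha, succ_nsmul]
      have h1 : f a ⊆ B := h a (Finset.mem_insert_self a s)
      have h2 : ∑ i ∈ s, f i ⊆ s.card • B := ih fun i hi => h i (Finset.mem_insert_of_mem hi)
      calc f a + ∑ i ∈ s, f i ⊆ B + s.card • B := add_subset_add h1 h2
        _ = s.card • B + B := add_comm _ _

lemma image_finsetSum {ι H : Type*} [AddCommGroup H] [DecidableEq H] [DecidableEq ι]
    (s : Finset ι) (f : ι → Finset G) (π : G →+ H) :
    (∑ i ∈ s, f i).image π = ∑ i ∈ s, (f i).image π := by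
  induction s using Finset.induction_on with
  | empty => simp; rfl
  | @insert a s ha ih =>
      rw [Finset.sum_insert ha, Finset.sum_insert ha, image_add π, ih]

lemma sum_piFinset {k : ℕ} {ι : Type*} [DecidableEq ι] (s : Finset ι)
    (f : ι → Fin k → Finset G) :
    ∑ j ∈ s, piFinset (f j) = piFinset (fun i => ∑ j ∈ s, f j i) := by
  induction s using Finset.induction_on with
  | empty =>
      ext x
      simp [Fintype.mem_piFinset, funext_iff, Finset.mem_zero]
  | @insert a s ha ih =>
      simp only [Finset.sum_insert ha, ih, ← piFinset_add]
end aux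

section aux2
variable {G : Type*} [AddCommGroup G] [DecidableEq G]

lemma GMR_aux1 (m : ℕ) (X : Finset G) (hX : X.Nonempty) (C : Fin (m+1) → Finset G) :
    (∑ i, C i).card * X.card ^ m ≤ (∑ i, (X + C i).card) ^ (m+1) := by
  classical
  set D : Fin (m+1) → Finset (G × ℤ) := fun i => (C i) ×ˢ ({((i : ℕ) : ℤ)} : Finset ℤ) with hD
  set Bh : Finset (G × ℤ) := Finset.univ.biUnion D with hBh
  set Xh : Finset (G × ℤ) := X ×ˢ ({0} : Finset ℤ) with hXh
  have hXhne : Xh.Nonempty := hX.product (Finset.singleton_nonempty _)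
  have hcardXh : Xh.card = X.card := by
    simp [hXh, Finset.card_product]
  -- step 1 : |∑ C| ≤ |(m+1) • Bh|
  have hsub : (∑ i : Fin (m+1), D i) ⊆ (m+1) • Bh := by
    have := sum_subset_card_nsmul (Finset.univ : Finset (Fin (m+1))) D Bh
      (fun i _ => Finset.subset_biUnion_of_mem D (Finset.mem_univ i))
    simpa using this
  have himg : (∑ i : Fin (m+1), D i).image (AddMonoidHom.fst G ℤ) = ∑ i, C i := by
    rw [image_finsetSum]
    refine Finset.sum_congr rfl fun i _ => ?_
    ext a
    simp [hD, Finset.mem_image, Finset.mem_product]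
  have step1 : (∑ i, C i).card ≤ ((m+1) • Bh).card := by
    calc (∑ i, C i).card = ((∑ i : Fin (m+1), D i).image (AddMonoidHom.fst G ℤ)).card := by
          rw [himg]
      _ ≤ (∑ i : Fin (m+1), D i).card := Finset.card_image_le
      _ ≤ ((m+1) • Bh).card := Finset.card_le_card hsub
  -- step 2 : |Xh + Bh| ≤ ∑ |X + C i|
  have step2 : (Xh + Bh).card ≤ ∑ i, (X + C i).card := by
    have hsub2 : Xh + Bh ⊆ Finset.univ.biUnion
        (fun i : Fin (m+1) => (X + C i) ×ˢ ({((i : ℕ) : ℤ)} : Finset ℤ)) := by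
      intro z hz
      rw [Finset.mem_add] at hz
      obtain ⟨a, ha, b, hb, rfl⟩ := hz
      rw [hXh, Finset.mem_product] at ha
      rw [hBh, Finset.mem_biUnion] at hb
      obtain ⟨i, -, hbD⟩ := hb
      rw [hD, Finset.mem_product] at hbD
      rw [Finset.mem_biUnion]
      refine ⟨i, Finset.mem_univ i, ?_⟩
      rw [Finset.mem_product]
      constructor
      · exact Finset.add_mem_add ha.1 hbD.1
      · have h0 : a.2 = 0 := by simpa using ha.2
        have hi : b.2 = ((i : ℕ) : ℤ) := by simpa using hbD.2
        simp [Prod.snd_add, h0, hi]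
    calc (Xh + Bh).card ≤ ∑ i : Fin (m+1), ((X + C i) ×ˢ ({((i : ℕ) : ℤ)} : Finset ℤ)).card :=
          le_trans (Finset.card_le_card hsub2) Finset.card_biUnion_le
      _ = ∑ i, (X + C i).card := by
          refine Finset.sum_congr rfl fun i _ => ?_
          simp [Finset.card_product]
  -- step 3 : Plünnecke–Ruzsa
  have hPR := Finset.pluennecke_ruzsa_inequality_nsmul_add hXhne Bh (m+1)
  -- combine in ℚ≥0
  have hx : (0 : ℚ≥0) < (X.card : ℚ≥0) := by
    exact_mod_cast Finset.card_pos.2 hX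
  set x : ℚ≥0 := (X.card : ℚ≥0) with hxe
  set Q : ℚ≥0 := ((∑ i, (X + C i).card : ℕ) : ℚ≥0) with hQe
  have hq : ((Xh + Bh).card : ℚ≥0) ≤ Q := by rw [hQe]; exact_mod_cast step2
  have key : ((∑ i, C i).card : ℚ≥0) * x ^ m ≤ Q ^ (m+1) := by
    have h1 : ((∑ i, C i).card : ℚ≥0) ≤ (Q / x) ^ (m+1) * x := by
      calc ((∑ i, C i).card : ℚ≥0) ≤ (((m+1) • Bh).card : ℚ≥0) := by exact_mod_cast step1
        _ ≤ (((Xh + Bh).card : ℚ≥0) / (Xh.card : ℚ≥0)) ^ (m+1) * (Xh.card : ℚ≥0) := hPR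
        _ ≤ (Q / x) ^ (m+1) * x := by
            rw [hcardXh]
            gcongr
    calc ((∑ i, C i).card : ℚ≥0) * x ^ m ≤ ((Q / x) ^ (m+1) * x) * x ^ m := by gcongr
      _ = Q ^ (m+1) / x ^ (m+1) * x ^ (m+1) := by
          rw [div_pow]; ring
      _ = Q ^ (m+1) := div_mul_cancel₀ _ (pow_ne_zero _ hx.ne')
  rw [hxe, hQe] at key
  exact_mod_cast key

end aux2

section aux3
variable {G : Type*} [AddCommGroup G] [DecidableEq G]

lemma GMR_aux2 (m : ℕ) (X : Finset G) (hX : X.Nonempty) (B : Fin (m+1) → Finset G) :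
    ((∑ i, B i).card * X.card ^ m) ^ (m+1)
      ≤ (m+1) ^ (m+1) * (∏ i, (X + B i).card) ^ (m+1) := by
  classical
  set X' : Finset (Fin (m+1) → G) := piFinset (fun _ => X) with hX'e
  have hX'ne : X'.Nonempty := by
    obtain ⟨a, ha⟩ := hX
    exact ⟨fun _ => a, by simp [hX'e, Fintype.mem_piFinset, ha]⟩
  set C : Fin (m+1) → Finset (Fin (m+1) → G) :=
    fun j => piFinset (fun i => B (j + i)) with hCe
  have hmain := GMR_aux1 m X' hX'ne C
  -- compute ∑ j, C j
  have hsum : ∑ j, C j = piFinset (fun _ => ∑ j, B j) := by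
    rw [hCe]
    rw [sum_piFinset]
    congr 1
    funext i
    exact Equiv.sum_comp (Equiv.addRight i) B
  have hcardsum : (∑ j, C j).card = (∑ j, B j).card ^ (m+1) := by
    rw [hsum, Fintype.card_piFinset]
    simp
  have hcardX' : X'.card = X.card ^ (m+1) := by
    rw [hX'e, Fintype.card_piFinset]; simp
  have haddcard : ∀ j : Fin (m+1), (X' + C j).card = ∏ i, (X + B i).card := by
    intro j
    have : X' + C j = piFinset (fun i => X + B (j + i)) := by
      rw [hX'e, hCe, ← piFinset_add]
    rw [this, Fintype.card_piFinset]
    exact Equiv.prod_comp (Equiv.addLeft j) (fun t => (X + B t).card)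
  have hsumcard : (∑ j : Fin (m+1), (X' + C j).card) = (m+1) * ∏ i, (X + B i).card := by
    rw [Finset.sum_congr rfl (fun j _ => haddcard j)]
    simp [Finset.sum_const, mul_comm]
  rw [hcardsum, hcardX', hsumcard] at hmain
  calc ((∑ i, B i).card * X.card ^ m) ^ (m+1)
      = (∑ i, B i).card ^ (m+1) * (X.card ^ (m+1)) ^ m := by
        rw [mul_pow, ← pow_mul, ← pow_mul, Nat.mul_comm m (m+1)]
    _ ≤ ((m+1) * ∏ i, (X + B i).card) ^ (m+1) := hmain
    _ = (m+1) ^ (m+1) * (∏ i, (X + B i).card) ^ (m+1) := mul_pow _ _ _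

end aux3

section aux4
variable {G : Type*} [AddCommGroup G] [DecidableEq G]

lemma GMR_aux3 (m : ℕ) (X : Finset G) (hX : X.Nonempty) (B : Fin (m+1) → Finset G) (n : ℕ) :
    (((∑ i, B i).card * X.card ^ m) ^ (m+1)) ^ n
      ≤ (m+1) ^ (m+1) * ((∏ i, (X + B i).card) ^ (m+1)) ^ n := by
  classical
  set X' : Finset (Fin n → G) := piFinset (fun _ => X) with hX'e
  have hX'ne : X'.Nonempty := by
    obtain ⟨a, ha⟩ := hX
    exact ⟨fun _ => a, by simp [hX'e, Fintype.mem_piFinset, ha]⟩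
  set B' : Fin (m+1) → Finset (Fin n → G) := fun i => piFinset (fun _ => B i) with hB'e
  have hmain := GMR_aux2 m X' hX'ne B'
  have hsum : ∑ i, B' i = piFinset (fun _ : Fin n => ∑ i, B i) := by
    rw [hB'e, sum_piFinset]
  have hcardsum : (∑ i, B' i).card = (∑ i, B i).card ^ n := by
    rw [hsum, Fintype.card_piFinset]; simp
  have hcardX' : X'.card = X.card ^ n := by
    rw [hX'e, Fintype.card_piFinset]; simp
  have haddcard : ∀ i, (X' + B' i).card = (X + B i).card ^ n := by
    intro i
    have : X' + B' i = piFinset (fun _ : Fin n => X + B i) := by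
      rw [hX'e, hB'e, ← piFinset_add]
    rw [this, Fintype.card_piFinset]; simp
  rw [hcardsum, hcardX'] at hmain
  have hprod : (∏ i, (X' + B' i).card) = (∏ i, (X + B i).card) ^ n := by
    rw [← Finset.prod_pow]
    exact Finset.prod_congr rfl fun i _ => haddcard i
  rw [hprod] at hmain
  calc (((∑ i, B i).card * X.card ^ m) ^ (m+1)) ^ n
      = ((∑ i, B i).card ^ n * (X.card ^ n) ^ m) ^ (m+1) := by ring_nf
    _ ≤ (m+1) ^ (m+1) * ((∏ i, (X + B i).card) ^ n) ^ (m+1) := hmain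
    _ = (m+1) ^ (m+1) * ((∏ i, (X + B i).card) ^ (m+1)) ^ n := by ring_nf

/-- binomial-type bound -/
lemma pow_succ_ge (b n : ℕ) : b ^ (n+1) + (n+1) * b ^ n ≤ (b+1) ^ (n+1) := by
  induction n with
  | zero => simp
  | succ n ih =>
      calc b ^ (n+2) + (n+2) * b ^ (n+1)
          ≤ (b ^ (n+1) + (n+1) * b ^ n) * (b+1) := by
            have e1 : b ^ (n+1) = b ^ n * b := pow_succ b n
            have e2 : b ^ (n+2) = b ^ n * b * b := by rw [pow_succ, pow_succ]
            rw [e1, e2]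
            nlinarith [Nat.zero_le (b ^ n)]
        _ ≤ (b+1) ^ (n+1) * (b+1) := Nat.mul_le_mul_right _ ih
        _ = (b+1) ^ (n+2) := by ring

lemma nat_le_of_forall_pow_le (a b c : ℕ) (hb : 1 ≤ b) (h : ∀ n, a ^ n ≤ c * b ^ n) :
    a ≤ b := by
  by_contra hab
  push_neg at hab
  set n := c * b with hn
  have hkey : c * b ^ (n+1) < (b+1) ^ (n+1) := by
    have h1 : b ^ (n+1) + (n+1) * b ^ n ≤ (b+1) ^ (n+1) := pow_succ_ge b n
    have hbn : 1 ≤ b ^ n := Nat.one_le_pow _ _ hb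
    have h4 : c * b ^ (n+1) < b ^ (n+1) + (n+1) * b ^ n := by
      have e1 : c * b ^ (n+1) = n * b ^ n := by rw [hn]; ring
      have hbn2 : 0 < b ^ n := Nat.one_le_pow _ _ hb
      have h5 : n * b ^ n < (n+1) * b ^ n := by nlinarith
      omega
    omega
  have h2 : (b+1) ^ (n+1) ≤ a ^ (n+1) := Nat.pow_le_pow_left (by omega) _
  have h3 := h (n+1)
  omega

end aux4

/-- Corollary of the Ruzsa–Plünnecke inequality:
`|B₁ + … + B_k| |X|^{k-1} ≤ ∏ i |X + B_i|`. -/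
theorem ruzsa_plunnecke_corollary (p : ℕ) (hp : p.Prime) (k : ℕ) (hk : 0 < k)
    (X : Finset (ZMod p)) (B : Fin k → Finset (ZMod p))
    (hX : X.Nonempty) (hB : ∀ i, (B i).Nonempty) :
    (∑ i, B i).card * X.card ^ (k - 1) ≤ ∏ i, (X + B i).card := by
  obtain ⟨m, rfl⟩ : ∃ m, k = m + 1 := ⟨k - 1, (Nat.succ_pred_eq_of_pos hk).symm⟩
  simp only [Nat.add_sub_cancel]
  have hRpos : 0 < ∏ i, (X + B i).card :=
    Finset.prod_pos fun i _ => Finset.card_pos.2 (hX.add (hB i))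
  have key : ((∑ i, B i).card * X.card ^ m) ^ (m+1) ≤ (∏ i, (X + B i).card) ^ (m+1) := by
    refine nat_le_of_forall_pow_le _ _ ((m+1)^(m+1)) (Nat.one_le_pow _ _ hRpos) ?_
    intro n
    exact GMR_aux3 m X hX B n
  exact (Nat.pow_le_pow_iff_left (Nat.succ_ne_zero m)).1 key
end

section
/- Let p be a prime and let X, Y, G be nonempty subsets of F_p. Then there exists ξ ∈ G such that |X + ξ*Y| ≥ p |X| |Y| |G| / ( |X| |Y| |G| + p² ). -/
open Pointwise Finset Complex

namespace GaraevAux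

variable {p : ℕ} [NeZero p]

noncomputable def ψ (p : ℕ) [NeZero p] : AddChar (ZMod p) ℂ := ZMod.stdAddChar

lemma ortho (a : ZMod p) :
    ∑ t : ZMod p, ψ p (a * t) = if a = 0 then (p : ℂ) else 0 := by
  split_ifs with h
  · subst h
    simp [ψ, ZMod.card]
  · have h1 := AddChar.sum_eq_zero_of_ne_one (ZMod.isPrimitive_stdAddChar p h)
    simpa [AddChar.mulShift_apply, ψ] using h1

lemma conj_ψ (a : ZMod p) : (starRingEnd ℂ) (ψ p a) = ψ p (-a) := by
  have habs : ‖ψ p a‖ = 1 := by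
    rw [ψ, ZMod.stdAddChar_apply]; exact Circle.norm_coe _
  have h2 : ψ p a * (starRingEnd ℂ) (ψ p a) = 1 := by
    rw [Complex.mul_conj]
    norm_cast
    rw [Complex.normSq_eq_norm_sq, habs]; norm_num
  have h1 : ψ p a * ψ p (-a) = 1 := by
    rw [← AddChar.map_add_eq_mul]; simp
  calc (starRingEnd ℂ) (ψ p a) = (starRingEnd ℂ) (ψ p a) * (ψ p a * ψ p (-a)) := by
        rw [h1, mul_one]
    _ = (ψ p a * (starRingEnd ℂ) (ψ p a)) * ψ p (-a) := by ring
    _ = ψ p (-a) := by rw [h2, one_mul]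

lemma parseval (A : Finset (ZMod p)) :
    ∑ t : ZMod p, Complex.normSq (∑ a ∈ A, ψ p (t * a)) = p * A.card := by
  have key : ∀ t : ZMod p, ((Complex.normSq (∑ a ∈ A, ψ p (t * a)) : ℝ) : ℂ)
      = ∑ a ∈ A, ∑ a' ∈ A, ψ p ((a - a') * t) := by
    intro t
    rw [← Complex.mul_conj, map_sum, Finset.sum_mul_sum]
    refine Finset.sum_congr rfl fun a _ => Finset.sum_congr rfl fun a' _ => ?_
    rw [conj_ψ, ← AddChar.map_add_eq_mul]
    congr 1; ring
  have hC : ∑ t : ZMod p, ((Complex.normSq (∑ a ∈ A, ψ p (t * a)) : ℝ) : ℂ)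
      = ((p : ℝ) * A.card : ℝ) := by
    simp_rw [key]
    rw [Finset.sum_comm]
    have : ∀ a ∈ A, ∑ t : ZMod p, ∑ a' ∈ A, ψ p ((a - a') * t)
        = ∑ a' ∈ A, ∑ t : ZMod p, ψ p ((a - a') * t) := fun a _ => Finset.sum_comm
    rw [Finset.sum_congr rfl this]
    simp_rw [ortho, sub_eq_zero]
    simp [Finset.sum_ite_eq]
    ring
  exact_mod_cast hC

lemma fourier_id (X Y : Finset (ZMod p)) (ξ : ZMod p) :
    (p : ℝ) * (∑ a ∈ X, ∑ b ∈ Y, ∑ a' ∈ X, ∑ b' ∈ Y,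
        if a + ξ * b = a' + ξ * b' then (1 : ℝ) else 0)
      = ∑ t : ZMod p,
          Complex.normSq (∑ a ∈ X, ψ p (t * a)) * Complex.normSq (∑ b ∈ Y, ψ p (t * ξ * b)) := by
  have key : ∀ t : ZMod p,
      ((Complex.normSq (∑ a ∈ X, ψ p (t * a)) * Complex.normSq (∑ b ∈ Y, ψ p (t * ξ * b)) : ℝ) : ℂ)
      = ∑ a ∈ X, ∑ b ∈ Y, ∑ a' ∈ X, ∑ b' ∈ Y,
          ψ p ((a - a' + ξ * (b - b')) * t) := by
    intro t
    push_cast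
    rw [← Complex.mul_conj, ← Complex.mul_conj, map_sum, map_sum]
    simp_rw [conj_ψ]
    rw [Finset.sum_mul_sum X X, Finset.sum_mul_sum Y Y, Finset.sum_mul_sum X Y]
    refine Finset.sum_congr rfl fun a _ => Finset.sum_congr rfl fun b _ => ?_
    rw [Finset.sum_mul_sum X Y]
    refine Finset.sum_congr rfl fun a' _ => Finset.sum_congr rfl fun b' _ => ?_
    simp only [← AddChar.map_add_eq_mul]
    congr 1
    ring
  have hswap : ∑ t : ZMod p, ∑ a ∈ X, ∑ b ∈ Y, ∑ a' ∈ X, ∑ b' ∈ Y,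
        ψ p ((a - a' + ξ * (b - b')) * t)
      = ∑ a ∈ X, ∑ b ∈ Y, ∑ a' ∈ X, ∑ b' ∈ Y,
        if a + ξ * b = a' + ξ * b' then (p : ℂ) else 0 := by
    rw [Finset.sum_comm]
    refine Finset.sum_congr rfl fun a _ => ?_
    rw [Finset.sum_comm]
    refine Finset.sum_congr rfl fun b _ => ?_
    rw [Finset.sum_comm]
    refine Finset.sum_congr rfl fun a' _ => ?_
    rw [Finset.sum_comm]
    refine Finset.sum_congr rfl fun b' _ => ?_
    rw [ortho]
    have hiff : (a - a' + ξ * (b - b') = 0) ↔ (a + ξ * b = a' + ξ * b') := by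
      constructor <;> intro h <;> linear_combination h
    simp only [hiff]
  have hC : (((p : ℝ) * (∑ a ∈ X, ∑ b ∈ Y, ∑ a' ∈ X, ∑ b' ∈ Y,
        if a + ξ * b = a' + ξ * b' then (1 : ℝ) else 0) : ℝ) : ℂ)
      = ∑ t : ZMod p,
        ((Complex.normSq (∑ a ∈ X, ψ p (t * a))
          * Complex.normSq (∑ b ∈ Y, ψ p (t * ξ * b)) : ℝ) : ℂ) := by
    simp_rw [key]
    rw [hswap]
    push_cast
    simp_rw [Finset.mul_sum]
    refine Finset.sum_congr rfl fun a _ => Finset.sum_congr rfl fun b _ =>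
      Finset.sum_congr rfl fun a' _ => Finset.sum_congr rfl fun b' _ => ?_
    split_ifs <;> simp
  exact_mod_cast hC

lemma cs (X Y : Finset (ZMod p)) (ξ : ZMod p) :
    ((X.card : ℝ) * Y.card) ^ 2
      ≤ ((X + ξ • Y).card : ℝ) * (∑ a ∈ X, ∑ b ∈ Y, ∑ a' ∈ X, ∑ b' ∈ Y,
          if a + ξ * b = a' + ξ * b' then (1 : ℝ) else 0) := by
  set S := X + ξ • Y with hS
  have hmem : ∀ a ∈ X, ∀ b ∈ Y, a + ξ * b ∈ S := by
    intro a ha b hb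
    exact Finset.add_mem_add ha (by
      rw [← smul_eq_mul]
      exact Finset.smul_mem_smul_finset hb)
  set N : ZMod p → ℝ := fun s => ∑ a ∈ X, ∑ b ∈ Y, if a + ξ * b = s then (1 : ℝ) else 0 with hN
  have h1 : ∑ s ∈ S, N s = (X.card : ℝ) * Y.card := by
    simp only [hN]
    rw [Finset.sum_comm]
    have : ∀ a ∈ X, (∑ s ∈ S, ∑ b ∈ Y, if a + ξ * b = s then (1:ℝ) else 0)
        = ∑ b ∈ Y, (1:ℝ) := by
      intro a ha
      rw [Finset.sum_comm]
      refine Finset.sum_congr rfl fun b hb => ?_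
      rw [Finset.sum_ite_eq S (a + ξ * b), if_pos (hmem a ha b hb)]
    rw [Finset.sum_congr rfl this]
    simp [mul_comm]
  have h2 : ∑ s ∈ S, (N s) ^ 2 = ∑ a ∈ X, ∑ b ∈ Y, ∑ a' ∈ X, ∑ b' ∈ Y,
      if a + ξ * b = a' + ξ * b' then (1 : ℝ) else 0 := by
    have expand : ∀ s, (N s) ^ 2 = ∑ a ∈ X, ∑ b ∈ Y, ∑ a' ∈ X, ∑ b' ∈ Y,
        (if a + ξ * b = s then (1:ℝ) else 0) * (if a' + ξ * b' = s then (1:ℝ) else 0) := by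
      intro s
      rw [sq, hN]
      rw [Finset.sum_mul_sum X X]
      refine Finset.sum_congr rfl fun a _ => ?_
      have hy : ∀ a' ∈ X, ((∑ b ∈ Y, if a + ξ * b = s then (1:ℝ) else 0)
            * ∑ b' ∈ Y, if a' + ξ * b' = s then (1:ℝ) else 0)
          = ∑ b ∈ Y, ∑ b' ∈ Y,
            (if a + ξ * b = s then (1:ℝ) else 0) * (if a' + ξ * b' = s then (1:ℝ) else 0) :=
        fun a' _ => Finset.sum_mul_sum Y Y _ _
      rw [Finset.sum_congr rfl hy]
      exact Finset.sum_comm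
    simp_rw [expand]
    rw [Finset.sum_comm]
    refine Finset.sum_congr rfl fun a ha => ?_
    rw [Finset.sum_comm]
    refine Finset.sum_congr rfl fun b hb => ?_
    rw [Finset.sum_comm]
    refine Finset.sum_congr rfl fun a' ha' => ?_
    rw [Finset.sum_comm]
    refine Finset.sum_congr rfl fun b' hb' => ?_
    simp only [ite_mul, one_mul, zero_mul]
    rw [Finset.sum_ite_eq S (a + ξ * b), if_pos (hmem a ha b hb)]
    exact if_congr eq_comm rfl rfl
  calc ((X.card : ℝ) * Y.card) ^ 2 = (∑ s ∈ S, N s) ^ 2 := by rw [h1]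
    _ ≤ S.card * ∑ s ∈ S, (N s) ^ 2 := sq_sum_le_card_mul_sum_sq
    _ = _ := by rw [h2]

end GaraevAux

open GaraevAux in
/-- Lemma 5 of Garaev: a dilate sum estimate via trigonometric sums. -/
theorem exists_dilate_sum_large (p : ℕ) (hp : p.Prime)
    (X Y G : Finset (ZMod p)) (hX : X.Nonempty) (hY : Y.Nonempty) (hG : G.Nonempty) :
    ∃ ξ ∈ G,
      (p : ℝ) * X.card * Y.card * G.card /
          ((X.card : ℝ) * Y.card * G.card + (p : ℝ) ^ 2)
        ≤ ((X + ξ • Y).card : ℝ) := by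
  haveI : Fact p.Prime := ⟨hp⟩
  haveI : NeZero p := ⟨hp.ne_zero⟩
  classical
  set E : ZMod p → ℝ := fun ξ => ∑ a ∈ X, ∑ b ∈ Y, ∑ a' ∈ X, ∑ b' ∈ Y,
      (if a + ξ * b = a' + ξ * b' then (1 : ℝ) else 0) with hE
  set A : ZMod p → ℝ := fun t => Complex.normSq (∑ a ∈ X, ψ p (t * a)) with hA
  set C : ZMod p → ℝ := fun u => Complex.normSq (∑ b ∈ Y, ψ p (u * b)) with hC
  have hAnn : ∀ t, 0 ≤ A t := fun t => Complex.normSq_nonneg _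
  have hCnn : ∀ u, 0 ≤ C u := fun u => Complex.normSq_nonneg _
  have hPX : ∑ t : ZMod p, A t = (p : ℝ) * X.card := parseval X
  have hPY : ∑ u : ZMod p, C u = (p : ℝ) * Y.card := parseval Y
  have hfour : ∀ ξ : ZMod p, (p : ℝ) * E ξ = ∑ t : ZMod p, A t * C (t * ξ) := by
    intro ξ
    simp only [hA, hC, hE]
    exact fourier_id X Y ξ
  have hx : (0:ℝ) < X.card := by exact_mod_cast Finset.card_pos.mpr hX
  have hy : (0:ℝ) < Y.card := by exact_mod_cast Finset.card_pos.mpr hY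
  have hg : (0:ℝ) < G.card := by exact_mod_cast Finset.card_pos.mpr hG
  have hp0 : (0:ℝ) < p := by exact_mod_cast hp.pos
  have key : ∑ ξ ∈ G, ((p:ℝ) * E ξ)
      ≤ (X.card:ℝ)^2 * (Y.card:ℝ)^2 * G.card + (p:ℝ)^2 * X.card * Y.card := by
    have h1 : ∑ ξ ∈ G, ((p:ℝ) * E ξ) = ∑ t : ZMod p, A t * (∑ ξ ∈ G, C (t * ξ)) := by
      simp_rw [hfour]
      rw [Finset.sum_comm]
      exact Finset.sum_congr rfl fun t _ => (Finset.mul_sum _ _ _).symm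
    rw [h1, ← Finset.add_sum_erase _ _ (Finset.mem_univ (0 : ZMod p))]
    have hA0 : A 0 = (X.card:ℝ)^2 := by
      simp only [hA, zero_mul, AddChar.map_zero_eq_one]
      simp [Complex.normSq_apply, sq]
    have hC0 : ∑ ξ ∈ G, C (0 * ξ) = (G.card:ℝ) * (Y.card:ℝ)^2 := by
      have h : ∀ ξ ∈ G, C (0 * ξ) = (Y.card:ℝ)^2 := by
        intro ξ _
        simp only [hC, zero_mul, AddChar.map_zero_eq_one]
        simp [Complex.normSq_apply, sq]
      rw [Finset.sum_congr rfl h]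
      simp [mul_comm]
    have hrest : ∑ t ∈ Finset.univ.erase (0:ZMod p), A t * (∑ ξ ∈ G, C (t * ξ))
        ≤ ((p:ℝ) * X.card) * ((p:ℝ) * Y.card) := by
      have hBd : ∀ t ∈ Finset.univ.erase (0:ZMod p),
          ∑ ξ ∈ G, C (t * ξ) ≤ (p:ℝ) * Y.card := by
        intro t ht
        have ht0 : t ≠ 0 := Finset.ne_of_mem_erase ht
        rw [← Finset.sum_image (fun x _ y _ h => mul_left_cancel₀ ht0 h)]
        calc ∑ u ∈ G.image (fun ξ => t * ξ), C u ≤ ∑ u : ZMod p, C u :=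
              Finset.sum_le_sum_of_subset_of_nonneg (Finset.subset_univ _)
                (fun u _ _ => hCnn u)
          _ = (p:ℝ) * Y.card := hPY
      calc ∑ t ∈ Finset.univ.erase (0:ZMod p), A t * (∑ ξ ∈ G, C (t * ξ))
          ≤ ∑ t ∈ Finset.univ.erase (0:ZMod p), A t * ((p:ℝ) * Y.card) :=
            Finset.sum_le_sum (fun t ht =>
              mul_le_mul_of_nonneg_left (hBd t ht) (hAnn t))
        _ = (∑ t ∈ Finset.univ.erase (0:ZMod p), A t) * ((p:ℝ) * Y.card) :=
            (Finset.sum_mul _ _ _).symm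
        _ ≤ ((p:ℝ) * X.card) * ((p:ℝ) * Y.card) := by
            have hsub : ∑ t ∈ Finset.univ.erase (0:ZMod p), A t ≤ ∑ t : ZMod p, A t :=
              Finset.sum_le_sum_of_subset_of_nonneg (Finset.subset_univ _)
                (fun t _ _ => hAnn t)
            exact mul_le_mul_of_nonneg_right (hsub.trans_eq hPX) (by positivity)
    calc A 0 * (∑ ξ ∈ G, C (0 * ξ)) + ∑ t ∈ Finset.univ.erase (0:ZMod p), A t * (∑ ξ ∈ G, C (t * ξ))
        ≤ A 0 * (∑ ξ ∈ G, C (0 * ξ)) + ((p:ℝ) * X.card) * ((p:ℝ) * Y.card) :=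
          add_le_add_right hrest _
      _ = (X.card:ℝ)^2 * (Y.card:ℝ)^2 * G.card + (p:ℝ)^2 * X.card * Y.card := by
          rw [hA0, hC0]; ring
  have hconst : ∑ _ξ ∈ G, (((X.card:ℝ)^2 * (Y.card:ℝ)^2 * G.card
      + (p:ℝ)^2 * X.card * Y.card) / G.card)
      = (X.card:ℝ)^2 * (Y.card:ℝ)^2 * G.card + (p:ℝ)^2 * X.card * Y.card := by
    rw [Finset.sum_const, nsmul_eq_mul]
    field_simp
  obtain ⟨ξ, hξG, hξ⟩ := Finset.exists_le_of_sum_le hG (key.trans_eq hconst.symm)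
  refine ⟨ξ, hξG, ?_⟩
  have hcs : ((X.card : ℝ) * Y.card) ^ 2 ≤ ((X + ξ • Y).card : ℝ) * E ξ := by
    simp only [hE]
    exact cs X Y ξ
  have hf1 : (G.card:ℝ) * ((p:ℝ) * E ξ)
      ≤ (X.card:ℝ)^2 * (Y.card:ℝ)^2 * G.card + (p:ℝ)^2 * X.card * Y.card := by
    rw [mul_comm]
    calc (p:ℝ) * E ξ * G.card
        ≤ (((X.card:ℝ)^2 * (Y.card:ℝ)^2 * G.card + (p:ℝ)^2 * X.card * Y.card) / G.card)
            * G.card := mul_le_mul_of_nonneg_right hξ hg.le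
      _ = _ := div_mul_cancel₀ _ hg.ne'
  have hSc : (0:ℝ) ≤ ((X + ξ • Y).card : ℝ) := by positivity
  have hden : (0:ℝ) < (X.card : ℝ) * Y.card * G.card + (p : ℝ) ^ 2 := by positivity
  rw [div_le_iff₀ hden]
  nlinarith [mul_le_mul_of_nonneg_left hcs (by positivity : (0:ℝ) ≤ (G.card:ℝ) * p),
    mul_le_mul_of_nonneg_left hf1 hSc,
    mul_pos hx hy, hg, hp0, hSc]
end

section
/- Let p be a prime and let X, Y, G be nonempty subsets of F_p. Then there exists ξ ∈ G such that |X + ξ*Y| ≥ |X| |Y| |G| / ( |X| |Y| + |G| ). -/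
open Pointwise Finset

-- Cauchy–Schwarz fiber counting
lemma aux_cs {α β : Type*} [DecidableEq α] [DecidableEq β] (s : Finset α) (f : α → β) :
    s.card ^ 2 ≤ (s.image f).card *
      ((s ×ˢ s).filter fun p => f p.1 = f p.2).card := by
  calc s.card ^ 2 = (∑ b ∈ s.image f, (s.filter fun a => f a = b).card) ^ 2 := by
        rw [← card_eq_sum_card_fiberwise fun a ha => mem_image_of_mem f ha]
      _ ≤ (s.image f).card * ∑ b ∈ s.image f, (s.filter fun a => f a = b).card ^ 2 := by
        simpa using sum_mul_sq_le_sq_mul_sq (R := ℕ) _ 1 _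
      _ = _ := by
        congr 1
        rw [card_eq_sum_card_fiberwise (f := fun p => f p.1) (t := s.image f)
          (fun p hp => by
            simp only [mem_coe, mem_filter, mem_product] at hp
            exact mem_image_of_mem f hp.1.1)]
        refine sum_congr rfl fun b hb => ?_
        rw [sq, ← card_product]
        congr 1
        ext q
        simp only [mem_filter, mem_product]
        constructor
        · rintro ⟨⟨h1, h4⟩, h2, h5⟩
          exact ⟨⟨⟨h1, h2⟩, h4.trans h5.symm⟩, h4⟩
        · rintro ⟨⟨⟨h1, h2⟩, h3⟩, h4⟩
          exact ⟨⟨h1, h4⟩, h2, h3 ▸ h4⟩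

/-- For any sets `X, Y, G ⊆ F_p` there exists `ξ ∈ G` with
`|X + ξ*Y| ≥ |X||Y||G| / (|X||Y| + |G|)`. -/
theorem exists_dilate_sum (p : ℕ) (hp : p.Prime)
    (X Y G : Finset (ZMod p)) (hX : X.Nonempty) (hY : Y.Nonempty) (hG : G.Nonempty) :
    ∃ ξ ∈ G,
      (X.card : ℝ) * Y.card * G.card / ((X.card : ℝ) * Y.card + G.card)
        ≤ ((X + ξ • Y).card : ℝ) := by
  haveI := Fact.mk hp
  set Q : Finset ((ZMod p × ZMod p) × ZMod p × ZMod p) := (X ×ˢ Y) ×ˢ (X ×ˢ Y) with hQ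
  set N : ZMod p → ℕ := fun ξ =>
    (Q.filter fun q => q.1.1 + ξ * q.1.2 = q.2.1 + ξ * q.2.2).card with hN
  -- counting bound on the sum of N
  have hsum : ∑ ξ ∈ G, N ξ ≤ X.card * Y.card * G.card + (X.card * Y.card) ^ 2 := by
    have h1 : ∑ ξ ∈ G, N ξ
        = ∑ q ∈ Q, (G.filter fun ξ => q.1.1 + ξ * q.1.2 = q.2.1 + ξ * q.2.2).card := by
      simp only [hN, card_filter]
      rw [Finset.sum_comm]
    rw [h1]
    have h2 : ∀ q ∈ Q, (G.filter fun ξ => q.1.1 + ξ * q.1.2 = q.2.1 + ξ * q.2.2).card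
        ≤ if q.1 = q.2 then G.card else 1 := by
      intro q hq
      split_ifs with hd
      · exact card_le_card (filter_subset _ _)
      · refine card_le_one.2 fun ξ hξ ξ' hξ' => ?_
        simp only [mem_filter] at hξ hξ'
        have e1 := hξ.2; have e2 := hξ'.2
        by_cases hy : q.1.2 = q.2.2
        · rw [hy] at e1
          have hx : q.1.1 = q.2.1 := by
            have := add_right_cancel e1
            exact this
          exact absurd (Prod.ext hx hy) hd
        · have : (ξ - ξ') * (q.1.2 - q.2.2) = 0 := by ring_nf; linear_combination e1 - e2
          rcases mul_eq_zero.1 this with h | h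
          · exact sub_eq_zero.1 h
          · exact absurd (sub_eq_zero.1 h) hy
    calc ∑ q ∈ Q, (G.filter fun ξ => q.1.1 + ξ * q.1.2 = q.2.1 + ξ * q.2.2).card
        ≤ ∑ q ∈ Q, if q.1 = q.2 then G.card else 1 := sum_le_sum h2
      _ = (Q.filter fun q => q.1 = q.2).card * G.card
          + (Q.filter fun q => ¬ q.1 = q.2).card := by
          rw [sum_ite, sum_const, sum_const, smul_eq_mul, smul_eq_mul, mul_one]
      _ ≤ X.card * Y.card * G.card + (X.card * Y.card) ^ 2 := by
          gcongr
          · calc (Q.filter fun q => q.1 = q.2).card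
                ≤ (X ×ˢ Y).card := by
                  refine card_le_card_of_injOn (fun q => q.1) (fun q hq => ?_)
                    (fun a ha b hb hab => ?_)
                  · simp only [hQ, mem_coe, mem_filter, mem_product] at hq
                    exact mem_product.2 hq.1.1
                  · simp only [mem_coe, mem_filter] at ha hb
                    have hab' : a.1 = b.1 := hab
                    exact Prod.ext hab' (by rw [← ha.2, ← hb.2, hab'])
              _ = X.card * Y.card := card_product _ _
          · calc (Q.filter fun q => ¬ q.1 = q.2).card ≤ Q.card :=
                  card_le_card (filter_subset _ _)
              _ = (X.card * Y.card) ^ 2 := by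
                  simp [hQ, card_product]; ring
  -- pick a good ξ
  obtain ⟨ξ, hξG, hξ⟩ := Finset.exists_le_of_sum_le hG
    (f := fun ξ => G.card * N ξ)
    (g := fun _ => X.card * Y.card * G.card + (X.card * Y.card) ^ 2)
    (by rw [← Finset.mul_sum, Finset.sum_const, smul_eq_mul]
        exact Nat.mul_le_mul_left _ hsum)
  refine ⟨ξ, hξG, ?_⟩
  -- Cauchy-Schwarz for this ξ
  have himg : (X ×ˢ Y).image (fun q => q.1 + ξ * q.2) = X + ξ • Y := by
    ext a
    simp only [mem_image, mem_product, Finset.mem_add, Finset.mem_smul_finset,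
      smul_eq_mul, Prod.exists]
    constructor
    · rintro ⟨x, y, ⟨hx, hy⟩, rfl⟩; exact ⟨x, hx, ξ * y, ⟨y, hy, rfl⟩, rfl⟩
    · rintro ⟨x, hx, _, ⟨y, hy, rfl⟩, rfl⟩; exact ⟨x, y, ⟨hx, hy⟩, rfl⟩
  have hcs : (X.card * Y.card) ^ 2 ≤ (X + ξ • Y).card * N ξ := by
    have := aux_cs (X ×ˢ Y) (fun q => q.1 + ξ * q.2)
    rw [himg, card_product] at this
    exact this
  -- cast to ℝ and finish
  have hXY1 : (1 : ℝ) ≤ (X.card : ℝ) * Y.card := by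
    have := Nat.one_le_iff_ne_zero.2 (Nat.mul_ne_zero hX.card_pos.ne' hY.card_pos.ne')
    exact_mod_cast Nat.one_le_iff_ne_zero.2
      (Nat.mul_ne_zero hX.card_pos.ne' hY.card_pos.ne')
  have hG1 : (1 : ℝ) ≤ (G.card : ℝ) := by exact_mod_cast hG.card_pos
  have hcsR : ((X.card : ℝ) * Y.card) ^ 2 ≤ ((X + ξ • Y).card : ℝ) * (N ξ : ℝ) := by
    exact_mod_cast hcs
  have hξR : (G.card : ℝ) * (N ξ : ℝ)
      ≤ (X.card : ℝ) * Y.card * G.card + ((X.card : ℝ) * Y.card) ^ 2 := by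
    exact_mod_cast hξ
  have hK0 : (0 : ℝ) ≤ ((X + ξ • Y).card : ℝ) := Nat.cast_nonneg _
  have hN0 : (0 : ℝ) ≤ (N ξ : ℝ) := Nat.cast_nonneg _
  rw [div_le_iff₀ (by positivity)]
  nlinarith [mul_le_mul_of_nonneg_left hcsR (le_trans zero_le_one hG1),
    mul_le_mul_of_nonneg_left hξR hK0]
end

section
/- Let p be a prime and let X, Y, G be nonempty subsets of F_p. Let I denote the number of quadruples (g, x, x₁, y, y₁) with g ∈ G, x, x₁ ∈ X, y, y₁ ∈ Y satisfying x + g y = x₁ + g y₁. Then I ≤ |X|² |Y|² |G| / p + p |X| |Y|. -/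
open Finset

lemma pair_card_eq_sum_sq {α β : Type*} [DecidableEq α] [DecidableEq β] [Fintype β]
    (P : Finset α) (f : α → β) :
    ((P ×ˢ P).filter (fun ab => f ab.1 = f ab.2)).card
      = ∑ c : β, ((P.filter (fun a => f a = c)).card) ^ 2 := by
  have h : ((P ×ˢ P).filter (fun ab => f ab.1 = f ab.2))
      = (univ : Finset β).biUnion
          (fun c => (P.filter (fun a => f a = c)) ×ˢ (P.filter (fun a => f a = c))) := by
    ext ⟨a, b⟩
    simp only [mem_filter, mem_product, mem_biUnion, mem_univ, true_and]
    constructor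
    · rintro ⟨⟨ha, hb⟩, h⟩
      exact ⟨f b, ⟨ha, h⟩, hb, rfl⟩
    · rintro ⟨c, ⟨ha, hfa⟩, hb, hfb⟩
      exact ⟨⟨ha, hb⟩, by rw [hfa, hfb]⟩
  rw [h, card_biUnion]
  · simp [sq, card_product]
  · intro c _ d _ hcd
    simp only [disjoint_left]
    rintro ⟨a, b⟩ hab hab'
    simp only [mem_product, mem_filter] at hab hab'
    exact hcd (by rw [← hab.1.2, hab'.1.2])

lemma quad_eq_pair {R : Type*} [CommRing R] [DecidableEq R] (X Y : Finset R) (g : R) :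
    ((X ×ˢ X ×ˢ Y ×ˢ Y).filter
        (fun q : R × R × R × R => q.1 + g * q.2.2.1 = q.2.1 + g * q.2.2.2)).card
      = (((X ×ˢ Y) ×ˢ (X ×ˢ Y)).filter
          (fun ab : (R × R) × (R × R) =>
            ab.1.1 + g * ab.1.2 = ab.2.1 + g * ab.2.2)).card := by
  apply Finset.card_nbij' (fun q => ((q.1, q.2.2.1), (q.2.1, q.2.2.2)))
    (fun ab => (ab.1.1, ab.2.1, ab.1.2, ab.2.2))
  · rintro ⟨x, x₁, y, y₁⟩ hq
    simp only [mem_coe, mem_filter, mem_product] at hq ⊢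
    tauto
  · rintro ⟨⟨x, y⟩, ⟨x₁, y₁⟩⟩ hab
    simp only [mem_coe, mem_filter, mem_product] at hab ⊢
    tauto
  · rintro ⟨x, x₁, y, y₁⟩ _
    rfl
  · rintro ⟨⟨x, y⟩, ⟨x₁, y₁⟩⟩ _
    rfl

/-- The number of solutions of `x + g y = x₁ + g y₁` with `g ∈ G`, `x, x₁ ∈ X`,
`y, y₁ ∈ Y` is at most `|X|²|Y|²|G|/p + p|X||Y|`. -/
theorem count_energy_bound (p : ℕ) (hp : p.Prime)
    (X Y G : Finset (ZMod p)) (hX : X.Nonempty) (hY : Y.Nonempty) (hG : G.Nonempty) :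
    (((G ×ˢ X ×ˢ X ×ˢ Y ×ˢ Y).filter
        (fun t : ZMod p × ZMod p × ZMod p × ZMod p × ZMod p =>
          t.2.1 + t.1 * t.2.2.2.1 = t.2.2.1 + t.1 * t.2.2.2.2)).card : ℝ)
      ≤ (X.card : ℝ) ^ 2 * (Y.card : ℝ) ^ 2 * G.card / p + (p : ℝ) * X.card * Y.card := by
  haveI : Fact p.Prime := ⟨hp⟩
  have hp0 : (0 : ℝ) < p := by exact_mod_cast hp.pos
  set E : ZMod p → ℕ := fun g =>
    ((X ×ˢ X ×ˢ Y ×ˢ Y).filter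
      (fun q : ZMod p × ZMod p × ZMod p × ZMod p =>
        q.1 + g * q.2.2.1 = q.2.1 + g * q.2.2.2)).card with hE
  set r : ZMod p → ZMod p → ℕ := fun g c =>
    ((X ×ˢ Y).filter (fun a : ZMod p × ZMod p => a.1 + g * a.2 = c)).card with hr
  -- Step 1: the count is ∑_{g ∈ G} E g
  have key1 : ((G ×ˢ X ×ˢ X ×ˢ Y ×ˢ Y).filter
        (fun t : ZMod p × ZMod p × ZMod p × ZMod p × ZMod p =>
          t.2.1 + t.1 * t.2.2.2.1 = t.2.2.1 + t.1 * t.2.2.2.2)).card = ∑ g ∈ G, E g := by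
    simp only [hE, Finset.card_filter, Finset.sum_product]
  -- Step 2: E g = ∑_c (r g c)^2
  have key2 : ∀ g, E g = ∑ c : ZMod p, (r g c) ^ 2 := by
    intro g
    have h := pair_card_eq_sum_sq (X ×ˢ Y) (fun a : ZMod p × ZMod p => a.1 + g * a.2)
    simp only [hE, hr]
    rw [quad_eq_pair]
    exact h
  -- Step 3: ∑_c r g c = |X||Y|
  have key3 : ∀ g, ∑ c : ZMod p, r g c = X.card * Y.card := by
    intro g
    rw [← card_product X Y]
    exact (Finset.card_eq_sum_card_fiberwise
      (f := fun a : ZMod p × ZMod p => a.1 + g * a.2) (fun x _ => mem_univ _)).symm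
  -- Step 4: ∑_{g : ZMod p} E g ≤ p|X||Y| + |X|²|Y|²
  have key4 : ∑ g : ZMod p, E g ≤ p * (X.card * Y.card) + X.card ^ 2 * Y.card ^ 2 := by
    set T := ((univ : Finset (ZMod p)) ×ˢ X ×ˢ X ×ˢ Y ×ˢ Y).filter
        (fun t : ZMod p × ZMod p × ZMod p × ZMod p × ZMod p =>
          t.2.1 + t.1 * t.2.2.2.1 = t.2.2.1 + t.1 * t.2.2.2.2) with hT
    have hsum : ∑ g : ZMod p, E g = T.card := by
      simp only [hT, hE, Finset.card_filter, Finset.sum_product]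
    rw [hsum]
    have hsplit := Finset.card_filter_add_card_filter_not
      (s := T) (p := fun t : ZMod p × ZMod p × ZMod p × ZMod p × ZMod p =>
        t.2.2.2.1 = t.2.2.2.2)
    rw [← hsplit]
    have hA : (T.filter (fun t : ZMod p × ZMod p × ZMod p × ZMod p × ZMod p =>
        t.2.2.2.1 = t.2.2.2.2)).card ≤ p * (X.card * Y.card) := by
      have hle : (T.filter (fun t : ZMod p × ZMod p × ZMod p × ZMod p × ZMod p =>
          t.2.2.2.1 = t.2.2.2.2)).card
          ≤ ((univ : Finset (ZMod p)) ×ˢ X ×ˢ Y).card := by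
        apply Finset.card_le_card_of_injOn
          (fun t => (t.1, t.2.1, t.2.2.2.1))
        · rintro ⟨g, x, x₁, y, y₁⟩ ht
          simp only [hT, mem_coe, mem_filter, mem_product] at ht ⊢
          exact ⟨mem_univ _, ht.1.1.2.1, ht.1.1.2.2.2.1⟩
        · rintro ⟨g, x, x₁, y, y₁⟩ ht ⟨g', x', x₁', y', y₁'⟩ ht' heq
          simp only [hT, mem_coe, mem_filter, mem_product] at ht ht'
          obtain ⟨⟨_, hcond⟩, hyy⟩ := ht
          obtain ⟨⟨_, hcond'⟩, hyy'⟩ := ht'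
          simp only [Prod.mk.injEq] at heq ⊢
          obtain ⟨hg, hx, hy⟩ := heq
          subst hyy hyy' hg hx hy
          have h1 : x = x₁ := add_right_cancel hcond
          have h2 : x = x₁' := add_right_cancel hcond'
          exact ⟨rfl, rfl, by rw [← h1]; exact h2, rfl, rfl⟩
      refine hle.trans ?_
      rw [card_product, card_product, card_univ, ZMod.card]
    have hB : (T.filter (fun t : ZMod p × ZMod p × ZMod p × ZMod p × ZMod p =>
        ¬ t.2.2.2.1 = t.2.2.2.2)).card ≤ X.card ^ 2 * Y.card ^ 2 := by
      have hle : (T.filter (fun t : ZMod p × ZMod p × ZMod p × ZMod p × ZMod p =>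
          ¬ t.2.2.2.1 = t.2.2.2.2)).card ≤ (X ×ˢ X ×ˢ Y ×ˢ Y).card := by
        apply Finset.card_le_card_of_injOn (fun t => t.2)
        · rintro ⟨g, x, x₁, y, y₁⟩ ht
          simp only [hT, mem_coe, mem_filter, mem_product] at ht ⊢
          exact ht.1.1.2
        · rintro ⟨g, x, x₁, y, y₁⟩ ht ⟨g', x', x₁', y', y₁'⟩ ht' heq
          simp only [hT, mem_coe, mem_filter, mem_product] at ht ht'
          obtain ⟨⟨_, hcond⟩, hyy⟩ := ht
          obtain ⟨⟨_, hcond'⟩, hyy'⟩ := ht'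
          simp only [Prod.mk.injEq] at heq ⊢
          obtain ⟨hx, hx₁, hy, hy₁⟩ := heq
          subst hx hx₁ hy hy₁
          refine ⟨?_, rfl, rfl, rfl, rfl⟩
          have hsub : g * (y - y₁) = g' * (y - y₁) := by
            have e1 : g * y - g * y₁ = x₁ - x := by linear_combination hcond
            have e2 : g' * y - g' * y₁ = x₁ - x := by linear_combination hcond'
            linear_combination e1 - e2
          have hne : y - y₁ ≠ 0 := sub_ne_zero.mpr hyy
          exact mul_right_cancel₀ hne hsub
      refine hle.trans (le_of_eq ?_)
      rw [card_product, card_product, card_product]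
      ring
    omega
  -- Real arithmetic
  set μ : ℝ := (X.card : ℝ) * Y.card / p with hμ
  set M : ℝ := (X.card : ℝ) ^ 2 * (Y.card : ℝ) ^ 2 / p with hM
  set V : ZMod p → ℝ := fun g => ∑ c : ZMod p, ((r g c : ℝ) - μ) ^ 2 with hV
  have hcardZ : ((univ : Finset (ZMod p)).card : ℝ) = p := by
    simp [ZMod.card]
  have hEg : ∀ g, (E g : ℝ) = M + V g := by
    intro g
    have h2 : (E g : ℝ) = ∑ c : ZMod p, (r g c : ℝ) ^ 2 := by
      exact_mod_cast congrArg (Nat.cast : ℕ → ℝ) (key2 g)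
    have h3 : ∑ c : ZMod p, (r g c : ℝ) = (X.card : ℝ) * Y.card := by
      exact_mod_cast congrArg (Nat.cast : ℕ → ℝ) (key3 g)
    have hexp : V g = (∑ c : ZMod p, (r g c : ℝ) ^ 2)
        - 2 * μ * (∑ c : ZMod p, (r g c : ℝ)) + p * μ ^ 2 := by
      have hc : ∀ c : ZMod p,
          ((r g c : ℝ) - μ) ^ 2 = (r g c : ℝ) ^ 2 - 2 * μ * (r g c : ℝ) + μ ^ 2 :=
        fun c => by ring
      simp only [hV]
      rw [Finset.sum_congr rfl fun c _ => hc c, Finset.sum_add_distrib,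
        Finset.sum_sub_distrib, ← Finset.mul_sum, Finset.sum_const, nsmul_eq_mul, hcardZ]
    rw [h2, hexp, h3, hμ, hM]
    field_simp
    ring
  have key1' : ((((G ×ˢ X ×ˢ X ×ˢ Y ×ˢ Y).filter
        (fun t : ZMod p × ZMod p × ZMod p × ZMod p × ZMod p =>
          t.2.1 + t.1 * t.2.2.2.1 = t.2.2.1 + t.1 * t.2.2.2.2)).card : ℝ))
      = ∑ g ∈ G, (E g : ℝ) := by
    rw [key1]; push_cast; ring
  rw [key1']
  have hVnonneg : ∀ g, 0 ≤ V g := fun g => Finset.sum_nonneg fun c _ => sq_nonneg _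
  have step : ∑ g ∈ G, (E g : ℝ) = G.card * M + ∑ g ∈ G, V g := by
    rw [Finset.sum_congr rfl (fun g _ => hEg g), Finset.sum_add_distrib,
      Finset.sum_const, nsmul_eq_mul]
  have hsub : ∑ g ∈ G, V g ≤ ∑ g : ZMod p, V g :=
    Finset.sum_le_sum_of_subset_of_nonneg (subset_univ G) (fun g _ _ => hVnonneg g)
  have huniv : ∑ g : ZMod p, V g ≤ p * X.card * Y.card := by
    have h4 : (∑ g : ZMod p, (E g : ℝ)) ≤ p * (X.card * Y.card) + X.card ^ 2 * Y.card ^ 2 := by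
      exact_mod_cast key4
    have h5 : ∑ g : ZMod p, (E g : ℝ) = p * M + ∑ g : ZMod p, V g := by
      rw [Finset.sum_congr rfl (fun g _ => hEg g), Finset.sum_add_distrib,
        Finset.sum_const, nsmul_eq_mul, hcardZ]
    have hpM : (p : ℝ) * M = X.card ^ 2 * Y.card ^ 2 := by
      rw [hM]; field_simp
    nlinarith [h4, h5, hpM]
  have hGM : (G.card : ℝ) * M = (X.card : ℝ) ^ 2 * (Y.card : ℝ) ^ 2 * G.card / p := by
    rw [hM]; ring
  calc ∑ g ∈ G, (E g : ℝ) = G.card * M + ∑ g ∈ G, V g := step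
    _ ≤ G.card * M + p * X.card * Y.card := by linarith [le_trans hsub huniv]
    _ = (X.card : ℝ) ^ 2 * (Y.card : ℝ) ^ 2 * G.card / p + p * X.card * Y.card := by
        rw [hGM]
end

section
/- Let p be a prime and let X, Y, G be nonempty subsets of F_p. Then there exists ξ ∈ G such that the number I₀ of solutions of x + ξ y = x₁ + ξ y₁ with x, x₁ ∈ X and y, y₁ ∈ Y satisfies I₀ ≤ |X|² |Y|² / p + p |X| |Y| / |G|. -/
open Finset

/-- There exists `ξ ∈ G` such that the number of solutions of `x + ξ y = x₁ + ξ y₁`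
with `x, x₁ ∈ X`, `y, y₁ ∈ Y` is at most `|X|²|Y|²/p + p|X||Y|/|G|`. -/
theorem exists_xi_energy_bound (p : ℕ) (hp : p.Prime)
    (X Y G : Finset (ZMod p)) (hX : X.Nonempty) (hY : Y.Nonempty) (hG : G.Nonempty) :
    ∃ ξ ∈ G,
      (((X ×ˢ X ×ˢ Y ×ˢ Y).filter
          (fun t : ZMod p × ZMod p × ZMod p × ZMod p =>
            t.1 + ξ * t.2.2.1 = t.2.1 + ξ * t.2.2.2)).card : ℝ)
        ≤ (X.card : ℝ) ^ 2 * (Y.card : ℝ) ^ 2 / p + (p : ℝ) * X.card * Y.card / G.card := by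
  haveI : Fact p.Prime := ⟨hp⟩
  have hcard : Fintype.card (ZMod p) = p := ZMod.card p
  set T : Finset (ZMod p × ZMod p × ZMod p × ZMod p) := X ×ˢ X ×ˢ Y ×ˢ Y with hT
  set N : ZMod p → ℕ := fun ξ =>
    (T.filter (fun t : ZMod p × ZMod p × ZMod p × ZMod p =>
        t.1 + ξ * t.2.2.1 = t.2.1 + ξ * t.2.2.2)).card with hN
  have hNcard : ∀ ξ, N ξ = ∑ t ∈ T,
      (if t.1 + ξ*t.2.2.1 = t.2.1 + ξ*t.2.2.2 then (1:ℕ) else 0) :=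
    fun ξ => Finset.card_filter _ _
  set r : ZMod p → ZMod p → ℕ := fun ξ c =>
    ∑ x ∈ X, ∑ y ∈ Y, if x + ξ*y = c then 1 else 0 with hr
  -- pointwise orthogonality
  have P1 : ∀ a b : ZMod p,
      ∑ c : ZMod p, ((if a = c then (1:ℕ) else 0) * (if b = c then 1 else 0))
        = if a = b then 1 else 0 := by
    intro a b
    simp [ite_mul, Finset.sum_ite_eq, eq_comm]
  have hrsum : ∀ ξ, ∑ c : ZMod p, r ξ c = X.card * Y.card := by
    intro ξ
    rw [Finset.sum_comm]
    have : ∀ x ∈ X, ∑ c : ZMod p, ∑ y ∈ Y, (if x + ξ*y = c then (1:ℕ) else 0)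
        = Y.card := by
      intro x hx
      rw [Finset.sum_comm]
      simp [Finset.sum_ite_eq']
    rw [Finset.sum_congr rfl this]
    simp [mul_comm]
  have hrsq : ∀ ξ, ∑ c : ZMod p, (r ξ c)^2 = N ξ := by
    intro ξ
    have hre : ∀ c, (r ξ c)^2 = ∑ t ∈ T,
        ((if t.1 + ξ*t.2.2.1 = c then (1:ℕ) else 0) *
         (if t.2.1 + ξ*t.2.2.2 = c then 1 else 0)) := by
      intro c
      rw [sq, hr, hT]
      simp only [Finset.sum_product]
      rw [Finset.sum_mul_sum]
      exact Finset.sum_congr rfl fun x _ => Finset.sum_congr rfl fun x₁ _ =>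
        Finset.sum_mul_sum _ _ _ _
    rw [Finset.sum_congr rfl fun c _ => hre c, Finset.sum_comm, hNcard]
    exact Finset.sum_congr rfl fun t _ => P1 _ _
  -- Cauchy-Schwarz lower bound
  have hlow : ∀ ξ, (X.card * Y.card : ℕ)^2 ≤ p * N ξ := by
    intro ξ
    calc (X.card * Y.card : ℕ)^2 = (∑ c : ZMod p, r ξ c)^2 := by rw [hrsum]
    _ ≤ (Finset.univ.card) * ∑ c : ZMod p, (r ξ c)^2 := sq_sum_le_card_mul_sum_sq
    _ = p * N ξ := by rw [hrsq, Finset.card_univ, hcard]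
  -- counting the total over all ξ
  have P2 : ∀ a b y y₁ : ZMod p,
      (∑ ξ : ZMod p, if a + ξ*y = b + ξ*y₁ then (1:ℕ) else 0)
        ≤ if a = b ∧ y = y₁ then p else 1 := by
    intro a b y y₁
    rw [← Finset.card_filter]
    by_cases h : a = b ∧ y = y₁
    · rw [if_pos h]
      calc _ ≤ Finset.univ.card := Finset.card_filter_le _ _
      _ = p := by rw [Finset.card_univ, hcard]
    · rw [if_neg h]
      apply Finset.card_le_one.2
      intro ξ₁ h₁ ξ₂ h₂
      simp only [Finset.mem_filter] at h₁ h₂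
      by_cases hy : y = y₁
      · subst hy
        exfalso
        have : a = b := by
          have := h₁.2
          simpa using this
        exact h (⟨this, rfl⟩)
      · have e1 := h₁.2
        have e2 := h₂.2
        have : (ξ₁ - ξ₂) * (y - y₁) = 0 := by ring_nf; linear_combination e1 - e2
        rcases mul_eq_zero.1 this with h' | h'
        · exact sub_eq_zero.1 h'
        · exact absurd (sub_eq_zero.1 h') hy
  -- diagonal count
  have hdiag : (T.filter (fun t => t.1 = t.2.1 ∧ t.2.2.1 = t.2.2.2)).card
      = X.card * Y.card := by
    rw [← Finset.card_product]
    apply Finset.card_nbij' (i := fun t => (t.1, t.2.2.1))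
      (j := fun q => (q.1, q.1, q.2, q.2)) <;>
      simp +contextual [hT, Finset.mem_filter, Finset.mem_product, Set.MapsTo, Set.LeftInvOn, Set.RightInvOn]
  have htotal : ∑ ξ : ZMod p, N ξ ≤ p * (X.card * Y.card) + X.card^2 * Y.card^2 := by
    have : ∑ ξ : ZMod p, N ξ = ∑ t ∈ T, ∑ ξ : ZMod p,
        (if t.1 + ξ*t.2.2.1 = t.2.1 + ξ*t.2.2.2 then (1:ℕ) else 0) := by
      rw [Finset.sum_comm]
      exact Finset.sum_congr rfl fun ξ _ => hNcard ξ
    rw [this]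
    calc ∑ t ∈ T, ∑ ξ : ZMod p, (if t.1 + ξ*t.2.2.1 = t.2.1 + ξ*t.2.2.2 then (1:ℕ) else 0)
        ≤ ∑ t ∈ T, (if t.1 = t.2.1 ∧ t.2.2.1 = t.2.2.2 then p else 1) :=
          Finset.sum_le_sum fun t _ => P2 _ _ _ _
      _ ≤ p * (X.card * Y.card) + X.card^2 * Y.card^2 := by
          have : ∀ t ∈ T, (if t.1 = t.2.1 ∧ t.2.2.1 = t.2.2.2 then p else 1)
              ≤ p * (if t.1 = t.2.1 ∧ t.2.2.1 = t.2.2.2 then 1 else 0) + 1 := by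
            intro t _
            by_cases h : t.1 = t.2.1 ∧ t.2.2.1 = t.2.2.2 <;> simp [h]
          calc _ ≤ ∑ t ∈ T, (p * (if t.1 = t.2.1 ∧ t.2.2.1 = t.2.2.2 then 1 else 0) + 1) :=
                Finset.sum_le_sum this
            _ = p * (X.card * Y.card) + T.card := by
                rw [Finset.sum_add_distrib, ← Finset.mul_sum, ← Finset.card_filter, hdiag]
                simp
            _ ≤ p * (X.card * Y.card) + X.card^2 * Y.card^2 := by
                have : T.card = X.card^2 * Y.card^2 := by
                  simp [hT, Finset.card_product]; ring
                rw [this]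
  -- now the averaging argument in ℝ
  have hp0 : (0:ℝ) < p := by exact_mod_cast hp.pos
  have hG0 : (0:ℝ) < G.card := by exact_mod_cast Finset.card_pos.2 hG
  set B : ℝ := (X.card : ℝ)^2 * (Y.card : ℝ)^2 / p with hB
  have hlowR : ∀ ξ, B ≤ (N ξ : ℝ) := by
    intro ξ
    rw [hB, div_le_iff₀ hp0]
    have := hlow ξ
    have : ((X.card * Y.card : ℕ)^2 : ℝ) ≤ ((p * N ξ : ℕ) : ℝ) := by exact_mod_cast this
    push_cast at this
    nlinarith [this]
  have key : ∑ ξ ∈ G, ((N ξ : ℝ) - B) ≤ (p : ℝ) * X.card * Y.card := by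
    calc ∑ ξ ∈ G, ((N ξ : ℝ) - B) ≤ ∑ ξ : ZMod p, ((N ξ : ℝ) - B) := by
          apply Finset.sum_le_sum_of_subset_of_nonneg (Finset.subset_univ G)
          intro ξ _ _
          linarith [hlowR ξ]
      _ = (∑ ξ : ZMod p, (N ξ : ℝ)) - p * B := by
          rw [Finset.sum_sub_distrib]
          simp [Finset.card_univ, hcard]
      _ ≤ (p * (X.card * Y.card) + X.card^2 * Y.card^2 : ℝ) - p * B := by
          have := htotal
          have : ((∑ ξ : ZMod p, N ξ : ℕ) : ℝ) ≤ ((p * (X.card * Y.card) + X.card^2 * Y.card^2 : ℕ) : ℝ) := by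
            exact_mod_cast this
          push_cast at this
          push_cast
          linarith
      _ = (p : ℝ) * X.card * Y.card := by
          rw [hB]
          field_simp
          ring
  have key2 : ∑ ξ ∈ G, ((N ξ : ℝ) - B) ≤ ∑ _ξ ∈ G, ((p : ℝ) * X.card * Y.card / G.card) := by
    rw [Finset.sum_const, nsmul_eq_mul]
    rw [mul_div_assoc', mul_comm, mul_div_assoc]
    calc ∑ ξ ∈ G, ((N ξ : ℝ) - B) ≤ (p : ℝ) * X.card * Y.card := key
      _ = (p : ℝ) * X.card * Y.card * (G.card / G.card) := by
          rw [div_self (ne_of_gt hG0), mul_one]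
      _ = _ := by ring
  obtain ⟨ξ, hξG, hle⟩ := Finset.exists_le_of_sum_le hG key2
  exact ⟨ξ, hξG, by rw [hN] at *; linarith [hle]⟩
end

section
/- Let p be a prime and A a subset of F_p with |A| > 1 and 0 ∉ A. Then there exist an absolute constant c > 0, an element b₀ ∈ A, a real number N ≥ 1, and a nonempty subset A₁ ⊆ A such that for every a ∈ A₁ one has N ≤ |a*A ∩ b₀*A| < 2N, and moreover N |A₁| ≥ c |A|³ / ( |AA| log |A| ). -/
open Pointwise Finset

private lemma fiber_card_eq {G : Type*} [Field G] [DecidableEq G] {A : Finset G} {a₁ a₂ : G}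
    (h₁ : a₁ ≠ 0) (h₂ : a₂ ≠ 0) :
    ((A ×ˢ A).filter fun y : G × G => a₁ * y.1 = a₂ * y.2).card
      = ((a₁ • A) ∩ (a₂ • A)).card := by
  apply Finset.card_bij (fun y _ => a₁ * y.1)
  · rintro ⟨b₁, b₂⟩ hy
    simp only [mem_filter, mem_product] at hy
    refine mem_inter.2 ⟨?_, ?_⟩
    · exact smul_mem_smul_finset hy.1.1
    · rw [hy.2]; exact smul_mem_smul_finset hy.1.2
  · rintro ⟨b₁, b₂⟩ hy ⟨c₁, c₂⟩ hz h
    simp only [mem_filter, mem_product] at hy hz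
    have e1 : b₁ = c₁ := mul_left_cancel₀ h₁ h
    have e2 : b₂ = c₂ := mul_left_cancel₀ h₂ (by rw [← hy.2, ← hz.2, h])
    simp [e1, e2]
  · intro x hx
    obtain ⟨hx1, hx2⟩ := mem_inter.1 hx
    obtain ⟨b₁, hb₁, rfl⟩ := mem_smul_finset.1 hx1
    obtain ⟨b₂, hb₂, hb⟩ := mem_smul_finset.1 hx2
    refine ⟨(b₁, b₂), ?_, rfl⟩
    simp only [mem_filter, mem_product, smul_eq_mul] at *
    exact ⟨⟨hb₁, hb₂⟩, hb.symm⟩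

private lemma energy_eq_sum_fibers {G : Type*} [Mul G] [DecidableEq G] (A : Finset G) :
    Finset.mulEnergy A A
      = ∑ q ∈ A ×ˢ A, ((A ×ˢ A).filter fun y : G × G => q.1 * y.1 = q.2 * y.2).card := by
  rw [Finset.mulEnergy,
    Finset.card_eq_sum_card_fiberwise (f := Prod.fst) (t := A ×ˢ A)
      (fun x hx => (Finset.mem_product.1 (Finset.mem_filter.1 hx).1).1)]
  refine Finset.sum_congr rfl fun q hq => ?_
  rw [Finset.filter_filter]
  apply Finset.card_bij (fun x _ => x.2)
  · rintro ⟨q', y⟩ hx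
    simp only [mem_filter, mem_product] at hx ⊢
    obtain ⟨⟨hq', hy⟩, hP, rfl⟩ := hx
    exact ⟨hy, hP⟩
  · rintro ⟨q1, y1⟩ h1 ⟨q2, y2⟩ h2 h
    simp only [mem_filter] at h1 h2
    simp only at h
    rw [Prod.ext_iff]
    exact ⟨h1.2.2.trans h2.2.2.symm, h⟩
  · intro y hy
    simp only [mem_filter] at hy
    refine ⟨(q, y), ?_, rfl⟩
    simp only [mem_filter, mem_product]
    refine ⟨⟨mem_product.1 hq, mem_product.1 hy.1⟩, hy.2, trivial⟩

/-- The pigeonhole step in Garaev's proof: there exist `b₀ ∈ A`, a dyadic level `N`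
and a subset `A₁ ⊆ A` such that `N ≤ |a*A ∩ b₀*A| < 2N` for all `a ∈ A₁` and
`N|A₁| ≫ |A|³ / (|AA| log |A|)`. -/
theorem exists_dyadic_level :
    ∃ c : ℝ, 0 < c ∧
      ∀ (p : ℕ), p.Prime → ∀ A : Finset (ZMod p), 1 < A.card → (0 : ZMod p) ∉ A →
        ∃ b₀ ∈ A, ∃ N : ℝ, 1 ≤ N ∧
          ∃ A₁ ⊆ A, A₁.Nonempty ∧
            (∀ a ∈ A₁, N ≤ ((a • A ∩ b₀ • A).card : ℝ) ∧
              ((a • A ∩ b₀ • A).card : ℝ) < 2 * N) ∧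
            c * (A.card : ℝ) ^ 3 / (((A * A).card : ℝ) * Real.log (A.card : ℝ))
              ≤ N * A₁.card := by
  refine ⟨Real.log 2 / 4, by positivity, fun p hp A hA h0 => ?_⟩
  haveI : Fact p.Prime := ⟨hp⟩
  set n := A.card with hn
  have hAne : A.Nonempty := Finset.card_pos.1 (by omega)
  have hne0 : ∀ a ∈ A, a ≠ 0 := fun a ha => fun h => h0 (h ▸ ha)
  -- energy identity
  have hE : Finset.mulEnergy A A = ∑ a₁ ∈ A, ∑ a₂ ∈ A, ((a₁ • A) ∩ (a₂ • A)).card := by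
    rw [energy_eq_sum_fibers, Finset.sum_product]
    refine Finset.sum_congr rfl fun a₁ h₁ => Finset.sum_congr rfl fun a₂ h₂ => ?_
    exact fiber_card_eq (hne0 _ h₁) (hne0 _ h₂)
  -- pick b₀ maximizing the inner sum (note: symmetric in the two coordinates)
  obtain ⟨b₀, hb₀, hmax⟩ :=
    Finset.exists_max_image A (fun b => ∑ a ∈ A, ((a • A) ∩ (b • A)).card) hAne
  set S : ℕ := ∑ a ∈ A, ((a • A) ∩ (b₀ • A)).card with hS
  have hES : Finset.mulEnergy A A ≤ n * S := by
    rw [hE, Finset.sum_comm]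
    calc ∑ a₂ ∈ A, ∑ a₁ ∈ A, ((a₁ • A) ∩ (a₂ • A)).card
        ≤ ∑ _a₂ ∈ A, S := Finset.sum_le_sum fun b hb => hmax b hb
      _ = n * S := by rw [Finset.sum_const, smul_eq_mul]
  -- basic bounds on f a := |aA ∩ b₀A|
  set f : ZMod p → ℕ := fun a => ((a • A) ∩ (b₀ • A)).card with hf
  have hf1 : ∀ a ∈ A, 1 ≤ f a := by
    intro a ha
    refine Finset.card_pos.2 ⟨a * b₀, Finset.mem_inter.2 ⟨?_, ?_⟩⟩
    · exact smul_mem_smul_finset hb₀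
    · rw [mul_comm]; exact smul_mem_smul_finset ha
  have hfn : ∀ a ∈ A, f a ≤ n := by
    intro a ha
    refine le_trans (Finset.card_le_card Finset.inter_subset_right) ?_
    rw [Finset.smul_finset_def]
    exact Finset.card_image_le
  -- dyadic decomposition
  set K : ℕ := Nat.log 2 n + 1 with hK
  have hfib : ∀ a ∈ A, Nat.log 2 (f a) ∈ Finset.range K := by
    intro a ha
    rw [Finset.mem_range, hK]
    exact Nat.lt_succ_of_le (Nat.log_mono_right (hfn a ha))
  have hSsplit : S = ∑ k ∈ Finset.range K,
      ∑ a ∈ A.filter (fun a => Nat.log 2 (f a) = k), f a :=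
    (Finset.sum_fiberwise_of_maps_to hfib f).symm
  obtain ⟨k₀, hk₀, hk₀max⟩ :=
    Finset.exists_max_image (Finset.range K)
      (fun k => ∑ a ∈ A.filter (fun a => Nat.log 2 (f a) = k), f a)
      ⟨0, Finset.mem_range.2 (Nat.succ_pos _)⟩
  set A₁ : Finset (ZMod p) := A.filter (fun a => Nat.log 2 (f a) = k₀) with hA₁
  set T : ℕ := ∑ a ∈ A₁, f a with hT
  have hSK : S ≤ K * T := by
    rw [hSsplit]
    calc ∑ k ∈ Finset.range K, ∑ a ∈ A.filter (fun a => Nat.log 2 (f a) = k), f a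
        ≤ ∑ _k ∈ Finset.range K, T := Finset.sum_le_sum fun k hk => hk₀max k hk
      _ = K * T := by rw [Finset.sum_const, smul_eq_mul, Finset.card_range]
  -- bounds on f on A₁
  have hlow : ∀ a ∈ A₁, 2 ^ k₀ ≤ f a := by
    intro a ha
    obtain ⟨haA, hlog⟩ := Finset.mem_filter.1 ha
    calc 2 ^ k₀ = 2 ^ Nat.log 2 (f a) := by rw [hlog]
      _ ≤ f a := Nat.pow_log_le_self 2 (by have := hf1 a haA; omega)
  have hhigh : ∀ a ∈ A₁, f a < 2 ^ (k₀ + 1) := by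
    intro a ha
    obtain ⟨haA, hlog⟩ := Finset.mem_filter.1 ha
    calc f a < 2 ^ (Nat.log 2 (f a) + 1) := Nat.lt_pow_succ_log_self one_lt_two _
      _ = 2 ^ (k₀ + 1) := by rw [hlog]
  have hTle : T ≤ 2 ^ (k₀ + 1) * A₁.card := by
    calc T ≤ ∑ _a ∈ A₁, 2 ^ (k₀ + 1) :=
          Finset.sum_le_sum fun a ha => le_of_lt (hhigh a ha)
      _ = 2 ^ (k₀ + 1) * A₁.card := by rw [Finset.sum_const, smul_eq_mul, mul_comm]
  -- S ≥ n > 0 hence T > 0 hence A₁ nonempty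
  have hSpos : n ≤ S := by
    calc n = ∑ _a ∈ A, 1 := by rw [Finset.sum_const, smul_eq_mul, mul_one]
      _ ≤ S := Finset.sum_le_sum hf1
  have hTpos : 0 < T := by
    by_contra h
    push_neg at h
    interval_cases T
    · have : S = 0 := Nat.le_zero.1 (le_trans hSK (by simp))
      omega
  have hA₁ne : A₁.Nonempty := by
    by_contra h
    rw [Finset.not_nonempty_iff_eq_empty] at h
    rw [hT, h, Finset.sum_empty] at hTpos
    exact lt_irrefl 0 hTpos
  -- the ℕ chain: n^4 ≤ |AA| * (n * (K * (2^(k₀+1) * |A₁|)))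
  have hchain : n ^ 4 ≤ (A * A).card * (n * (K * (2 ^ (k₀ + 1) * A₁.card))) := by
    calc n ^ 4 = n ^ 2 * n ^ 2 := by ring
      _ ≤ (A * A).card * Finset.mulEnergy A A := Finset.le_card_mul_mul_mulEnergy A A
      _ ≤ (A * A).card * (n * S) := Nat.mul_le_mul_left _ hES
      _ ≤ (A * A).card * (n * (K * T)) :=
          Nat.mul_le_mul_left _ (Nat.mul_le_mul_left _ hSK)
      _ ≤ (A * A).card * (n * (K * (2 ^ (k₀ + 1) * A₁.card))) :=
          Nat.mul_le_mul_left _ (Nat.mul_le_mul_left _ (Nat.mul_le_mul_left _ hTle))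
  -- move to the reals
  refine ⟨b₀, hb₀, (2 : ℝ) ^ k₀, one_le_pow₀ one_le_two, A₁, Finset.filter_subset _ _,
    hA₁ne, fun a ha => ⟨?_, ?_⟩, ?_⟩
  · have := hlow a ha
    calc ((2 : ℝ)) ^ k₀ = ((2 ^ k₀ : ℕ) : ℝ) := by push_cast; ring
      _ ≤ (f a : ℝ) := Nat.cast_le.2 this
  · have := hhigh a ha
    calc ((a • A ∩ b₀ • A).card : ℝ) = (f a : ℝ) := rfl
      _ < ((2 ^ (k₀ + 1) : ℕ) : ℝ) := Nat.cast_lt.2 this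
      _ = 2 * 2 ^ k₀ := by push_cast; ring
  · -- real inequality
    have hn2 : (2 : ℝ) ≤ (n : ℝ) := by exact_mod_cast hA
    have hlogn : Real.log 2 ≤ Real.log n := Real.log_le_log (by norm_num) hn2
    have hlog2pos : (0 : ℝ) < Real.log 2 := Real.log_pos (by norm_num)
    have hlognpos : (0 : ℝ) < Real.log n := lt_of_lt_of_le hlog2pos hlogn
    have hAAcard : (0 : ℝ) < ((A * A).card : ℝ) := by
      have : (A * A).Nonempty := hAne.mul hAne
      exact_mod_cast Finset.card_pos.2 this
    rw [div_le_iff₀ (by positivity)]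
    -- cast the ℕ chain, divide by n
    have hnpos : (0 : ℝ) < (n : ℝ) := by linarith
    have hchainR : (n : ℝ) ^ 3 ≤ ((A * A).card : ℝ) * (K * (2 ^ (k₀ + 1) * A₁.card)) := by
      have h4 : (n : ℝ) ^ 4 ≤ ((A * A).card : ℝ) * ((n : ℝ) * (K * (2 ^ (k₀ + 1) * A₁.card))) := by
        exact_mod_cast hchain
      have : (n : ℝ) * (n : ℝ) ^ 3 ≤ (n : ℝ) * (((A * A).card : ℝ) * (K * (2 ^ (k₀ + 1) * A₁.card))) := by
        nlinarith [h4]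
      exact le_of_mul_le_mul_left this hnpos
    -- K * log 2 ≤ 2 * log n
    have hKlog : (K : ℝ) * Real.log 2 ≤ 2 * Real.log n := by
      have h2L : ((2 : ℕ) ^ Nat.log 2 n : ℝ) ≤ (n : ℝ) := by
        exact_mod_cast Nat.pow_log_le_self 2 (by omega)
      have hLlog : (Nat.log 2 n : ℝ) * Real.log 2 ≤ Real.log n := by
        have := Real.log_le_log (by positivity) h2L
        rw [Real.log_pow] at this
        push_cast at this
        convert this using 2 <;> norm_num
      have : (K : ℝ) = (Nat.log 2 n : ℝ) + 1 := by rw [hK]; push_cast; ring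
      rw [this]
      nlinarith
    -- conclude
    have key : Real.log 2 / 4 * ((n : ℝ) ^ 3)
        ≤ Real.log 2 / 4 * (((A * A).card : ℝ) * (K * (2 ^ (k₀ + 1) * A₁.card))) := by
      have := hchainR
      nlinarith [hlog2pos]
    calc Real.log 2 / 4 * (n : ℝ) ^ 3
        ≤ Real.log 2 / 4 * (((A * A).card : ℝ) * (K * (2 ^ (k₀ + 1) * A₁.card))) := key
      _ = (K : ℝ) * Real.log 2 / 4 * (((A * A).card : ℝ) * (2 ^ (k₀ + 1) * A₁.card)) := by ring
      _ ≤ 2 * Real.log n / 4 * (((A * A).card : ℝ) * (2 ^ (k₀ + 1) * A₁.card)) := by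
          have hrest : (0 : ℝ) ≤ ((A * A).card : ℝ) * (2 ^ (k₀ + 1) * A₁.card) := by positivity
          have := hKlog
          nlinarith
      _ = 2 ^ k₀ * (A₁.card : ℝ) * (((A * A).card : ℝ) * Real.log n) := by
          push_cast
          ring
end

section
/- Let p be a prime, A a nonempty finite subset of F_p, and a, b ∈ F_p with a ≠ 0 and b ≠ 0. Suppose N is a real number with 1 ≤ N ≤ |a*A ∩ b*A|. Then |a*A + b*A| ≤ |A+A|² / N and |a*A − b*A| ≤ |A+A|² / N. -/
open Pointwise

private lemma card_smul_ne_zero {p : ℕ} [Fact (p.Prime)] (a : ZMod p) (ha : a ≠ 0)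
    (A : Finset (ZMod p)) : (a • A).card = A.card := by
  have : a • A = (Units.mk0 a ha : ZMod p) • A := rfl
  rw [this]
  exact Finset.card_smul_finset (Units.mk0 a ha) _

/-- If `N ≤ |a*A ∩ b*A|` then `|a*A ± b*A| ≤ |A+A|²/N`. -/
theorem dilate_sum_diff_bound (p : ℕ) (hp : p.Prime) (A : Finset (ZMod p))
    (hA : A.Nonempty) (a b : ZMod p) (ha : a ≠ 0) (hb : b ≠ 0)
    (N : ℝ) (hN1 : 1 ≤ N) (hN2 : N ≤ ((a • A ∩ b • A).card : ℝ)) :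
    ((a • A + b • A).card : ℝ) ≤ ((A + A).card : ℝ) ^ 2 / N ∧
    ((a • A - b • A).card : ℝ) ≤ ((A + A).card : ℝ) ^ 2 / N := by
  haveI : Fact p.Prime := ⟨hp⟩
  set M := a • A ∩ b • A with hM
  have hMa : M ⊆ a • A := Finset.inter_subset_left
  have hMb : M ⊆ b • A := Finset.inter_subset_right
  have hN0 : (0 : ℝ) < N := lt_of_lt_of_le one_pos hN1
  -- bounds on the two factors
  have h1 : (a • A + M).card ≤ (A + A).card := by
    calc (a • A + M).card ≤ (a • A + a • A).card :=
          Finset.card_le_card (Finset.add_subset_add_left hMa)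
      _ = (a • (A + A)).card := by rw [smul_add]
      _ = (A + A).card := card_smul_ne_zero a ha _
  have h2 : (M + b • A).card ≤ (A + A).card := by
    calc (M + b • A).card ≤ (b • A + b • A).card :=
          Finset.card_le_card (Finset.add_subset_add_right hMb)
      _ = (b • (A + A)).card := by rw [smul_add]
      _ = (A + A).card := card_smul_ne_zero b hb _
  have h2' : (b • A + M).card ≤ (A + A).card := by rwa [add_comm] at h2
  -- Ruzsa triangle inequalities
  have key : ∀ X : Finset (ZMod p), (X.card * M.card ≤ (A + A).card * (A + A).card) →
      ((X.card : ℝ) ≤ ((A + A).card : ℝ) ^ 2 / N) := by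
    intro X hX
    rw [le_div_iff₀ hN0]
    calc (X.card : ℝ) * N ≤ (X.card : ℝ) * (M.card : ℝ) := by
          apply mul_le_mul_of_nonneg_left hN2 (Nat.cast_nonneg _)
      _ ≤ ((A + A).card : ℝ) * ((A + A).card : ℝ) := by exact_mod_cast Nat.cast_le.2 hX
      _ = ((A + A).card : ℝ) ^ 2 := (sq _).symm
  constructor
  · apply key
    calc (a • A + b • A).card * M.card
        ≤ (a • A + M).card * (M + b • A).card :=
          Finset.ruzsa_triangle_inequality_add_add_add _ _ _
      _ ≤ (A + A).card * (A + A).card := Nat.mul_le_mul h1 h2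
  · apply key
    calc (a • A - b • A).card * M.card
        ≤ (a • A + M).card * (b • A + M).card :=
          Finset.ruzsa_triangle_inequality_sub_add_add _ _ _
      _ ≤ (A + A).card * (A + A).card := Nat.mul_le_mul h1 h2'
end
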